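/- arXiv:2404.07683 — 3 statements merged into one kernel-verified Lean document; each statement's English description precedes it below -/
import Mathlib

section
/- For every quantum channel N from a d_A-dimensional system A to a d_B-dimensional system B (with d_A ≥ 2), the maximum causal effect satisfies CE_max(N) = max over pairs of unit vectors ψ, ψ⊥ ∈ ℂ^{d_A} with ⟨ψ|ψ⊥⟩ = 0 of (1/2)·‖N(|ψ⟩⟨ψ|) − N(|ψ⊥⟩⟨ψ⊥|)‖₁; in particular the supremum defining CE_max is attained on pairs of orthogonal pure states. -/
open Matrix ComplexOrder

/-- Trace norm of a square complex matrix. -/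
noncomputable def traceNorm {n : Type*} [Fintype n] [DecidableEq n]
    (X : Matrix n n ℂ) : ℝ :=
  (((Matrix.posSemidef_conjTranspose_mul_self X).1.eigenvectorUnitary.1 *
      diagonal (((↑) : ℝ → ℂ) ∘ (√·) ∘ (Matrix.posSemidef_conjTranspose_mul_self X).1.eigenvalues) *
      (star (Matrix.posSemidef_conjTranspose_mul_self X).1.eigenvectorUnitary : Matrix n n ℂ)).trace).re

/-- A density matrix: positive semidefinite with unit trace. -/
def IsDensityMatrix {n : Type*} [Fintype n] [DecidableEq n] (ρ : Matrix n n ℂ) : Prop :=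
  ρ.PosSemidef ∧ ρ.trace = 1

/-- A quantum channel: a linear map admitting a Kraus representation. -/
def IsQuantumChannel {dA dB : ℕ}
    (N : Matrix (Fin dA) (Fin dA) ℂ →ₗ[ℂ] Matrix (Fin dB) (Fin dB) ℂ) : Prop :=
  ∃ (k : ℕ) (K : Fin k → Matrix (Fin dB) (Fin dA) ℂ),
    (∀ X, N X = ∑ i, K i * X * (K i)ᴴ) ∧ (∑ i, (K i)ᴴ * K i = 1)

/-- Maximum causal effect. -/
noncomputable def CEmax {dA dB : ℕ}
    (N : Matrix (Fin dA) (Fin dA) ℂ →ₗ[ℂ] Matrix (Fin dB) (Fin dB) ℂ) : ℝ :=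
  sSup {x : ℝ | ∃ ρ ρ' : Matrix (Fin dA) (Fin dA) ℂ,
    IsDensityMatrix ρ ∧ IsDensityMatrix ρ' ∧ ρ ≠ ρ' ∧
    x = traceNorm (N ρ - N ρ') / traceNorm (ρ - ρ')}

/-- Minimum causal effect. -/
noncomputable def CEmin {dA dB : ℕ}
    (N : Matrix (Fin dA) (Fin dA) ℂ →ₗ[ℂ] Matrix (Fin dB) (Fin dB) ℂ) : ℝ :=
  sInf {x : ℝ | ∃ ρ ρ' : Matrix (Fin dA) (Fin dA) ℂ,
    IsDensityMatrix ρ ∧ IsDensityMatrix ρ' ∧ ρ ≠ ρ' ∧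
    x = traceNorm (N ρ - N ρ') / traceNorm (ρ - ρ')}

/-- Minimum distinguishability preservation. -/
noncomputable def DPmin {dA dB : ℕ}
    (N : Matrix (Fin dA) (Fin dA) ℂ →ₗ[ℂ] Matrix (Fin dB) (Fin dB) ℂ) : ℝ :=
  sInf {x : ℝ | ∃ p : ℝ, 0 ≤ p ∧ p ≤ 1 ∧
    ∃ ρ ρ' : Matrix (Fin dA) (Fin dA) ℂ,
      IsDensityMatrix ρ ∧ IsDensityMatrix ρ' ∧ ρ ≠ ρ' ∧
      x = traceNorm ((p : ℂ) • N ρ - ((1 - p : ℝ) : ℂ) • N ρ') /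
          traceNorm ((p : ℂ) • ρ - ((1 - p : ℝ) : ℂ) • ρ')}


set_option linter.unusedSectionVars false
set_option linter.unusedVariables false
open scoped MatrixOrder
section TNauxSec
variable {n : Type*} [Fintype n] [DecidableEq n]

namespace TNaux


/-- Apply a real function to a Hermitian matrix through its spectrum. -/
noncomputable def spec {A : Matrix n n ℂ} (hA : A.IsHermitian) (g : ℝ → ℝ) : Matrix n n ℂ :=
  (hA.eigenvectorUnitary : Matrix n n ℂ) * diagonal (fun i => (g (hA.eigenvalues i) : ℂ)) *
    (hA.eigenvectorUnitary : Matrix n n ℂ)ᴴ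

lemma spec_id {A : Matrix n n ℂ} (hA : A.IsHermitian) : spec hA id = A := by
  rw [spec]
  conv_rhs => rw [hA.spectral_theorem, Unitary.conjStarAlgAut_apply]
  rfl

lemma spec_mul {A : Matrix n n ℂ} (hA : A.IsHermitian) (g h : ℝ → ℝ) :
    spec hA g * spec hA h = spec hA (g * h) := by
  have hU : (hA.eigenvectorUnitary : Matrix n n ℂ)ᴴ * (hA.eigenvectorUnitary : Matrix n n ℂ) = 1 := by
    simpa [star_eq_conjTranspose] using Unitary.coe_star_mul_self hA.eigenvectorUnitary
  simp only [spec, Matrix.mul_assoc]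
  rw [← Matrix.mul_assoc ((hA.eigenvectorUnitary : Matrix n n ℂ)ᴴ), hU, Matrix.one_mul,
    ← Matrix.mul_assoc (diagonal _), diagonal_mul_diagonal]
  have : (fun i => ((g (hA.eigenvalues i) : ℂ)) * ((h (hA.eigenvalues i) : ℂ)))
      = fun i => (((g * h) (hA.eigenvalues i) : ℝ) : ℂ) := by
    ext i; rw [Pi.mul_apply, Complex.ofReal_mul]
  rw [this]

lemma spec_trace {A : Matrix n n ℂ} (hA : A.IsHermitian) (g : ℝ → ℝ) :
    (spec hA g).trace = (∑ i, g (hA.eigenvalues i) : ℝ) := by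
  have hU : (hA.eigenvectorUnitary : Matrix n n ℂ)ᴴ * (hA.eigenvectorUnitary : Matrix n n ℂ) = 1 := by
    simpa [star_eq_conjTranspose] using Unitary.coe_star_mul_self hA.eigenvectorUnitary
  rw [spec, trace_mul_cycle, hU, Matrix.one_mul, trace_diagonal]
  push_cast
  rfl

lemma spec_posSemidef {A : Matrix n n ℂ} (hA : A.IsHermitian) {g : ℝ → ℝ}
    (hg : ∀ x, 0 ≤ g x) : (spec hA g).PosSemidef := by
  refine PosSemidef.mul_mul_conjTranspose_same ?_ _
  rw [posSemidef_diagonal_iff]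
  intro i
  rw [RCLike.nonneg_iff]
  constructor <;> simp [hg]

lemma spec_hermitian {A : Matrix n n ℂ} (hA : A.IsHermitian) (g : ℝ → ℝ) :
    (spec hA g).IsHermitian := by
  apply Matrix.isHermitian_mul_mul_conjTranspose
  rw [isHermitian_diagonal_iff]
  intro i
  exact Complex.conj_ofReal _

lemma spec_sub {A : Matrix n n ℂ} (hA : A.IsHermitian) (g h : ℝ → ℝ) :
    spec hA g - spec hA h = spec hA (g - h) := by
  simp only [spec, ← Matrix.sub_mul, ← Matrix.mul_sub, diagonal_sub]
  congr 2
  ext i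
  simp

lemma spec_one {A : Matrix n n ℂ} (hA : A.IsHermitian) : spec hA 1 = 1 := by
  have hU : (hA.eigenvectorUnitary : Matrix n n ℂ) * (hA.eigenvectorUnitary : Matrix n n ℂ)ᴴ = 1 := by
    simpa [star_eq_conjTranspose] using Unitary.coe_mul_star_self hA.eigenvectorUnitary
  simp only [spec]
  simpa using hU

lemma traceNorm_eq_of_sq {X S : Matrix n n ℂ} (hS : S.PosSemidef) (h : S ^ 2 = Xᴴ * X) :
    traceNorm X = S.trace.re := by
  have h0 := Matrix.posSemidef_conjTranspose_mul_self X
  have ha : (0 : Matrix n n ℂ) ≤ Xᴴ * X := Matrix.nonneg_iff_posSemidef.mpr h0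
  have hb : (0 : Matrix n n ℂ) ≤ S := Matrix.nonneg_iff_posSemidef.mpr hS
  have e1 : traceNorm X = (cfc Real.sqrt (Xᴴ * X)).trace.re := by
    rw [h0.1.cfc_eq, IsHermitian.cfc, Unitary.conjStarAlgAut_apply]; rfl
  have e3 : CFC.sqrt (Xᴴ * X) = cfc Real.sqrt (Xᴴ * X) := by
    rw [CFC.sqrt_eq_real_sqrt _ ha, cfcₙ_eq_cfc]
  have e2 : cfc Real.sqrt (Xᴴ * X) = S := by
    rw [← e3]
    exact CFC.sqrt_unique (by rw [← pow_two, h]) hb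
  rw [e1, e2]

lemma sqrt_eq_spec_abs {A : Matrix n n ℂ} (hA : A.IsHermitian) :
    traceNorm A = (spec hA (fun x => |x|)).trace.re := by
  refine traceNorm_eq_of_sq (spec_posSemidef hA (fun x => abs_nonneg x)) ?_
  rw [pow_two, spec_mul]
  have h1 : ((fun x => |x|) * fun x => |x|) = (id * id : ℝ → ℝ) := by
    ext x; exact abs_mul_abs_self x
  rw [h1, ← spec_mul, spec_id, hA.eq]

lemma traceNorm_eq_sum_abs_eigenvalues {A : Matrix n n ℂ} (hA : A.IsHermitian) :
    traceNorm A = ∑ i, |hA.eigenvalues i| := by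
  rw [sqrt_eq_spec_abs hA, spec_trace]
  exact Complex.ofReal_re _

lemma trace_re_nonneg {M : Matrix n n ℂ} (hM : M.PosSemidef) : 0 ≤ M.trace.re := by
  have h := spec_id hM.1
  have := spec_trace hM.1 id
  rw [h] at this
  rw [this, Complex.ofReal_re]
  exact Finset.sum_nonneg fun i _ => hM.eigenvalues_nonneg i

lemma trace_mul_re_nonneg {P S : Matrix n n ℂ} (hP : P.PosSemidef) (hS : S.PosSemidef) :
    0 ≤ (P * S).trace.re := by
  have hR : (CFC.sqrt P).PosSemidef := Matrix.nonneg_iff_posSemidef.mp (CFC.sqrt_nonneg P)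
  have hconj : CFC.sqrt P * S * (CFC.sqrt P)ᴴ = CFC.sqrt P * S * CFC.sqrt P := by rw [hR.1]
  have hpsd : (CFC.sqrt P * S * CFC.sqrt P).PosSemidef := by
    rw [← hconj]; exact hS.mul_mul_conjTranspose_same _
  have : (P * S).trace = (CFC.sqrt P * S * CFC.sqrt P).trace := by
    conv_lhs => rw [← CFC.sqrt_mul_sqrt_self P (Matrix.nonneg_iff_posSemidef.mpr hP)]
    rw [Matrix.mul_assoc, trace_mul_comm]
  rw [this]
  exact trace_re_nonneg hpsd

lemma spec_mul_trace_le {A P : Matrix n n ℂ} (hA : A.IsHermitian) (hP : P.PosSemidef)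
    {f : ℝ → ℝ} (hf0 : ∀ x, 0 ≤ f x) (hf1 : ∀ x, f x ≤ 1) :
    (spec hA f * P).trace.re ≤ P.trace.re := by
  have h1 : (1 : Matrix n n ℂ) - spec hA f = spec hA (1 - f) := by
    rw [← spec_one hA, spec_sub]
  have h2 : 0 ≤ ((spec hA (1 - f)) * P).trace.re :=
    trace_mul_re_nonneg (spec_posSemidef hA (fun x => by simpa using hf1 x)) hP
  rw [← h1, Matrix.sub_mul, Matrix.one_mul, trace_sub, Complex.sub_re] at h2
  linarith

lemma traceNorm_le_of_decomp {A P Q : Matrix n n ℂ} (hA : A.IsHermitian)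
    (hP : P.PosSemidef) (hQ : Q.PosSemidef) (h : A = P - Q) :
    traceNorm A ≤ P.trace.re + Q.trace.re := by
  have r1 : ∀ x : ℝ, (if 0 < x then (1:ℝ) else 0) * x = max x 0 := by
    intro x
    by_cases h' : 0 < x
    · simp [h', max_eq_left h'.le]
    · simp [h', max_eq_right (not_lt.mp h')]
  have r2 : ∀ x : ℝ, (if x < 0 then (1:ℝ) else 0) * x = -max (-x) 0 := by
    intro x
    by_cases h' : x < 0
    · simp [h', max_eq_left (by linarith : (0:ℝ) ≤ -x)]
    · simp [h', max_eq_right (by simpa using not_lt.mp h' : -x ≤ 0)]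
  have key : ∀ f : ℝ → ℝ,
      (spec hA f * A).trace.re = (spec hA f * P).trace.re - (spec hA f * Q).trace.re := by
    intro f
    have : spec hA f * A = spec hA f * P - spec hA f * Q := by
      rw [← Matrix.mul_sub]; exact congrArg _ h
    rw [this, trace_sub, Complex.sub_re]
  have spec_mul_A : ∀ f : ℝ → ℝ,
      (spec hA f * A).trace.re = ∑ i, f (hA.eigenvalues i) * hA.eigenvalues i := by
    intro f
    have h0 : spec hA f * A = spec hA (f * id) := by
      rw [← spec_mul]; exact congrArg _ (spec_id hA).symm
    rw [h0, spec_trace, Complex.ofReal_re]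
    rfl
  set ind : ℝ → ℝ := fun x => if 0 < x then 1 else 0 with hind
  set ind' : ℝ → ℝ := fun x => if x < 0 then 1 else 0 with hind'
  have hind0 : ∀ x, 0 ≤ ind x := fun x => by by_cases h' : 0 < x <;> simp [hind, h']
  have hind1 : ∀ x, ind x ≤ 1 := fun x => by by_cases h' : 0 < x <;> simp [hind, h']
  have hind'0 : ∀ x, 0 ≤ ind' x := fun x => by by_cases h' : x < 0 <;> simp [hind', h']
  have hind'1 : ∀ x, ind' x ≤ 1 := fun x => by by_cases h' : x < 0 <;> simp [hind', h']
  have hpos : ∑ i, max (hA.eigenvalues i) 0 ≤ P.trace.re := by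
    have e1 : (spec hA ind * A).trace.re = ∑ i, max (hA.eigenvalues i) 0 := by
      rw [spec_mul_A ind]
      exact Finset.sum_congr rfl fun i _ => r1 _
    have e2 := key ind
    have e3 := trace_mul_re_nonneg (spec_posSemidef hA hind0) hQ
    have e4 := spec_mul_trace_le hA hP hind0 hind1
    linarith
  have hneg : ∑ i, max (-hA.eigenvalues i) 0 ≤ Q.trace.re := by
    have e1 : (spec hA ind' * A).trace.re = -∑ i, max (-hA.eigenvalues i) 0 := by
      rw [spec_mul_A ind', ← Finset.sum_neg_distrib]
      exact Finset.sum_congr rfl fun i _ => r2 _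
    have e2 := key ind'
    have e3 := trace_mul_re_nonneg (spec_posSemidef hA hind'0) hP
    have e4 := spec_mul_trace_le hA hQ hind'0 hind'1
    linarith
  have habs : traceNorm A = ∑ i, max (hA.eigenvalues i) 0 + ∑ i, max (-hA.eigenvalues i) 0 := by
    rw [traceNorm_eq_sum_abs_eigenvalues hA, ← Finset.sum_add_distrib]
    refine Finset.sum_congr rfl fun i _ => ?_
    rcases le_total 0 (hA.eigenvalues i) with h'|h'
    · rw [abs_of_nonneg h', max_eq_left h', max_eq_right (by linarith)]; ring
    · rw [abs_of_nonpos h', max_eq_right h', max_eq_left (by linarith)]; ring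
  linarith

lemma abs_eq_maxadd (x : ℝ) : |x| = max x 0 + max (-x) 0 := by
  rcases le_total 0 x with h'|h'
  · rw [abs_of_nonneg h', max_eq_left h', max_eq_right (by linarith)]; ring
  · rw [abs_of_nonpos h', max_eq_right h', max_eq_left (by linarith)]; ring

lemma jordan {A : Matrix n n ℂ} (hA : A.IsHermitian) :
    A = spec hA (fun x => max x 0) - spec hA (fun x => max (-x) 0) := by
  rw [spec_sub]
  have : ((fun x => max x 0) - fun x => max (-x) 0) = (id : ℝ → ℝ) := by
    ext x
    simp only [Pi.sub_apply, id]
    rcases le_total 0 x with h'|h'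
    · rw [max_eq_left h', max_eq_right (by linarith)]; ring
    · rw [max_eq_right h', max_eq_left (by linarith)]; ring
  rw [this, spec_id]

lemma traceNorm_add_le {A B : Matrix n n ℂ} (hA : A.IsHermitian) (hB : B.IsHermitian) :
    traceNorm (A + B) ≤ traceNorm A + traceNorm B := by
  set pp : ℝ → ℝ := fun x => max x 0 with hpp
  set qq : ℝ → ℝ := fun x => max (-x) 0 with hqq
  have hppn : ∀ x, 0 ≤ pp x := fun x => le_max_right _ _
  have hqqn : ∀ x, 0 ≤ qq x := fun x => le_max_right _ _
  have hdecomp : A + B = (spec hA pp + spec hB pp) - (spec hA qq + spec hB qq) := by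
    nth_rewrite 1 [jordan hA, jordan hB]
    abel
  have hle := traceNorm_le_of_decomp (hA.add hB)
    ((spec_posSemidef hA hppn).add (spec_posSemidef hB hppn))
    ((spec_posSemidef hA hqqn).add (spec_posSemidef hB hqqn)) hdecomp
  rw [trace_add, trace_add, spec_trace, spec_trace, spec_trace, spec_trace] at hle
  rw [traceNorm_eq_sum_abs_eigenvalues hA, traceNorm_eq_sum_abs_eigenvalues hB]
  have e1 : ∀ i, |hA.eigenvalues i| = pp (hA.eigenvalues i) + qq (hA.eigenvalues i) :=
    fun i => abs_eq_maxadd _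
  have e2 : ∀ i, |hB.eigenvalues i| = pp (hB.eigenvalues i) + qq (hB.eigenvalues i) :=
    fun i => abs_eq_maxadd _
  simp only [e1, e2, Finset.sum_add_distrib]
  simp only [Complex.add_re, Complex.ofReal_re] at hle
  linarith

lemma traceNorm_smul (c : ℝ) (hc : 0 ≤ c) (X : Matrix n n ℂ) :
    traceNorm ((c : ℂ) • X) = c * traceNorm X := by
  have h0 := Matrix.posSemidef_conjTranspose_mul_self X
  have hR : (CFC.sqrt (Xᴴ * X)).PosSemidef := Matrix.nonneg_iff_posSemidef.mp (CFC.sqrt_nonneg _)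
  have hRR : CFC.sqrt (Xᴴ * X) * CFC.sqrt (Xᴴ * X) = Xᴴ * X :=
    CFC.sqrt_mul_sqrt_self _ (Matrix.nonneg_iff_posSemidef.mpr h0)
  have hRsq : CFC.sqrt (Xᴴ * X) ^ 2 = Xᴴ * X := by rw [pow_two, hRR]
  have hBpsd : ((c : ℂ) • CFC.sqrt (Xᴴ * X)).PosSemidef := hR.smul (by exact_mod_cast hc)
  have hsq : ((c : ℂ) • CFC.sqrt (Xᴴ * X)) ^ 2 = ((c : ℂ) • X)ᴴ * ((c : ℂ) • X) := by
    rw [conjTranspose_smul, Complex.star_def, Complex.conj_ofReal]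
    rw [pow_two, smul_mul_assoc, mul_smul_comm, hRR,
      smul_mul_assoc, mul_smul_comm, smul_smul]
  rw [traceNorm_eq_of_sq hBpsd hsq, traceNorm_eq_of_sq hR hRsq, trace_smul, smul_eq_mul]
  simp [Complex.mul_re]

lemma traceNorm_zero : traceNorm (0 : Matrix n n ℂ) = 0 := by
  have := traceNorm_smul 0 le_rfl (0 : Matrix n n ℂ)
  simpa using this

lemma isHermitian_finsum {ι : Type*} (s : Finset ι) (f : ι → Matrix n n ℂ)
    (hf : ∀ i ∈ s, (f i).IsHermitian) : (∑ i ∈ s, f i).IsHermitian := by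
  rw [IsHermitian, conjTranspose_sum]
  exact Finset.sum_congr rfl hf

lemma traceNorm_sum_le {ι : Type*} (s : Finset ι) (f : ι → Matrix n n ℂ)
    (hf : ∀ i ∈ s, (f i).IsHermitian) :
    traceNorm (∑ i ∈ s, f i) ≤ ∑ i ∈ s, traceNorm (f i) := by
  classical
  induction s using Finset.induction_on with
  | empty => simp [traceNorm_zero]
  | insert a s' hx ih =>
    rw [Finset.sum_insert hx, Finset.sum_insert hx]
    calc traceNorm (f a + ∑ i ∈ s', f i)
        ≤ traceNorm (f a) + traceNorm (∑ i ∈ s', f i) :=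
          traceNorm_add_le (hf a (Finset.mem_insert_self a s'))
            (isHermitian_finsum s' f fun i hi => hf i (Finset.mem_insert_of_mem hi))
      _ ≤ traceNorm (f a) + ∑ i ∈ s', traceNorm (f i) := by
          have := ih fun i hi => hf i (Finset.mem_insert_of_mem hi)
          linarith

lemma vecMulVec_mul_vecMulVec (a b c d : n → ℂ) :
    vecMulVec a b * vecMulVec c d = (b ⬝ᵥ c) • vecMulVec a d := by
  ext i j
  simp only [mul_apply, vecMulVec_apply, Matrix.smul_apply, smul_eq_mul, dotProduct, Finset.sum_mul]
  refine Finset.sum_congr rfl fun k _ => by ring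

lemma vecMulVec_mulVec (a b x : n → ℂ) : (vecMulVec a b) *ᵥ x = (b ⬝ᵥ x) • a := by
  ext i
  simp only [mulVec, dotProduct, vecMulVec_apply, Pi.smul_apply, smul_eq_mul, Finset.sum_mul]
  refine Finset.sum_congr rfl fun k _ => by ring

lemma vecMulVec_star_hermitian (ψ : n → ℂ) : (vecMulVec ψ (star ψ)).IsHermitian := by
  rw [IsHermitian]
  ext i j
  simp only [conjTranspose_apply, vecMulVec_apply, Pi.star_apply, star_mul', star_star]
  ring

lemma trace_vecMulVec (a b : n → ℂ) : (vecMulVec a b).trace = b ⬝ᵥ a := by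
  rw [trace, dotProduct]
  exact Finset.sum_congr rfl fun i _ => by rw [diag_apply, vecMulVec_apply]; ring

lemma posSemidef_vecMulVec_star (ψ : n → ℂ) : (vecMulVec ψ (star ψ)).PosSemidef := by
  refine PosSemidef.of_dotProduct_mulVec_nonneg (vecMulVec_star_hermitian ψ) fun x => ?_
  rw [vecMulVec_mulVec, dotProduct_smul, smul_eq_mul]
  have h1 : star x ⬝ᵥ ψ = star (star ψ ⬝ᵥ x) := by
    rw [star_dotProduct]
  rw [h1]
  exact mul_star_self_nonneg _

/-- columns of eigenvectorUnitary are orthonormal -/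

lemma eigcol_orthonormal {A : Matrix n n ℂ} (hA : A.IsHermitian) (i j : n) :
    star (fun k => (hA.eigenvectorUnitary : Matrix n n ℂ) k i) ⬝ᵥ
      (fun k => (hA.eigenvectorUnitary : Matrix n n ℂ) k j) = if i = j then 1 else 0 := by
  have hU : (hA.eigenvectorUnitary : Matrix n n ℂ)ᴴ * (hA.eigenvectorUnitary : Matrix n n ℂ) = 1 := by
    simpa [star_eq_conjTranspose] using Unitary.coe_star_mul_self hA.eigenvectorUnitary
  have h2 := congrFun (congrFun hU i) j
  rw [mul_apply] at h2
  have h3 : star (fun k => (hA.eigenvectorUnitary : Matrix n n ℂ) k i) ⬝ᵥ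
      (fun k => (hA.eigenvectorUnitary : Matrix n n ℂ) k j)
      = ∑ k, (hA.eigenvectorUnitary : Matrix n n ℂ)ᴴ i k * (hA.eigenvectorUnitary : Matrix n n ℂ) k j := by
    simp [dotProduct, conjTranspose_apply]
  rw [h3, h2, one_apply]

/-- rank-one spectral decomposition -/

lemma spectral_sum {A : Matrix n n ℂ} (hA : A.IsHermitian) :
    A = ∑ i, (hA.eigenvalues i : ℂ) •
      vecMulVec (fun k => (hA.eigenvectorUnitary : Matrix n n ℂ) k i)
        (star fun k => (hA.eigenvectorUnitary : Matrix n n ℂ) k i) := by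
  conv_lhs => rw [hA.spectral_theorem, Unitary.conjStarAlgAut_apply]
  ext a b
  rw [mul_apply, Matrix.sum_apply]
  refine Finset.sum_congr rfl fun k _ => ?_
  rw [Matrix.mul_diagonal]
  simp only [Matrix.star_apply, Matrix.smul_apply, vecMulVec_apply, Pi.star_apply, smul_eq_mul,
    Function.comp_apply]
  rw [mul_right_comm, mul_comm]
  norm_cast

lemma channel_hermitian {dA dB : ℕ}
    {N : Matrix (Fin dA) (Fin dA) ℂ →ₗ[ℂ] Matrix (Fin dB) (Fin dB) ℂ}
    (hN : IsQuantumChannel N) {X : Matrix (Fin dA) (Fin dA) ℂ} (hX : X.IsHermitian) :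
    (N X).IsHermitian := by
  obtain ⟨k, K, hK, -⟩ := hN
  rw [IsHermitian, hK, conjTranspose_sum]
  refine Finset.sum_congr rfl fun i _ => ?_
  rw [conjTranspose_mul, conjTranspose_mul, conjTranspose_conjTranspose, hX.eq, Matrix.mul_assoc]

lemma pure_density {ψ : n → ℂ} (hψ : star ψ ⬝ᵥ ψ = 1) :
    IsDensityMatrix (vecMulVec ψ (star ψ)) :=
  ⟨posSemidef_vecMulVec_star ψ, by rw [trace_vecMulVec, hψ]⟩

lemma star_dot_comm (a b : n → ℂ) : star a ⬝ᵥ b = star (star b ⬝ᵥ a) := by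
  rw [star_dotProduct]

lemma pure_ne {ψ ψp : n → ℂ} (hψ : star ψ ⬝ᵥ ψ = 1) (horth : star ψ ⬝ᵥ ψp = 0) :
    vecMulVec ψ (star ψ) ≠ vecMulVec ψp (star ψp) := by
  intro h
  have h1 : vecMulVec ψ (star ψ) *ᵥ ψ = ψ := by
    rw [vecMulVec_mulVec, hψ, one_smul]
  have h2 : vecMulVec ψp (star ψp) *ᵥ ψ = 0 := by
    rw [vecMulVec_mulVec]
    have : star ψp ⬝ᵥ ψ = 0 := by rw [star_dot_comm, horth, star_zero]
    rw [this, zero_smul]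
  rw [h, h2] at h1
  have : star ψ ⬝ᵥ ψ = 0 := by rw [← h1]; simp
  rw [hψ] at this
  exact one_ne_zero this

lemma orth_pure_sq {ψ ψp : n → ℂ} (hψ : star ψ ⬝ᵥ ψ = 1) (hψp : star ψp ⬝ᵥ ψp = 1)
    (horth : star ψ ⬝ᵥ ψp = 0) :
    (vecMulVec ψ (star ψ) - vecMulVec ψp (star ψp)) *
      (vecMulVec ψ (star ψ) - vecMulVec ψp (star ψp))
      = vecMulVec ψ (star ψ) + vecMulVec ψp (star ψp) := by
  have horth' : star ψp ⬝ᵥ ψ = 0 := by rw [star_dot_comm, horth, star_zero]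
  rw [Matrix.sub_mul, Matrix.mul_sub, Matrix.mul_sub]
  rw [vecMulVec_mul_vecMulVec, vecMulVec_mul_vecMulVec, vecMulVec_mul_vecMulVec,
    vecMulVec_mul_vecMulVec, hψ, hψp, horth, horth', one_smul, one_smul, zero_smul, zero_smul]
  abel

lemma traceNorm_orth_pure_diff {ψ ψp : n → ℂ} (hψ : star ψ ⬝ᵥ ψ = 1)
    (hψp : star ψp ⬝ᵥ ψp = 1) (horth : star ψ ⬝ᵥ ψp = 0) :
    traceNorm (vecMulVec ψ (star ψ) - vecMulVec ψp (star ψp)) = 2 := by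
  set D := vecMulVec ψ (star ψ) - vecMulVec ψp (star ψp) with hD
  set S := vecMulVec ψ (star ψ) + vecMulVec ψp (star ψp) with hS
  have hDherm : D.IsHermitian := (vecMulVec_star_hermitian ψ).sub (vecMulVec_star_hermitian ψp)
  have hSpsd : S.PosSemidef := (posSemidef_vecMulVec_star ψ).add (posSemidef_vecMulVec_star ψp)
  have horth' : star ψp ⬝ᵥ ψ = 0 := by rw [star_dot_comm, horth, star_zero]
  have hS2 : S ^ 2 = Dᴴ * D := by
    rw [hDherm.eq, hD, orth_pure_sq hψ hψp horth, pow_two, hS]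
    rw [Matrix.add_mul, Matrix.mul_add, Matrix.mul_add]
    rw [vecMulVec_mul_vecMulVec, vecMulVec_mul_vecMulVec, vecMulVec_mul_vecMulVec,
      vecMulVec_mul_vecMulVec, hψ, hψp, horth, horth', one_smul, one_smul, zero_smul, zero_smul]
    abel
  rw [traceNorm_eq_of_sq hSpsd hS2, hS, trace_add, trace_vecMulVec, trace_vecMulVec, hψ, hψp]
  norm_num

end TNaux
end TNauxSec

namespace TNaux

lemma sum_split {ι : Type*} [Fintype ι] [DecidableEq ι] {α : Type*} [AddCommMonoid α]
    (lam : ι → ℝ) (g : ι → α) (h0 : ∀ i, lam i = 0 → g i = 0) :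
    ∑ i, g i = ∑ i ∈ Finset.univ.filter (fun i => 0 < lam i), g i
      + ∑ i ∈ Finset.univ.filter (fun i => lam i < 0), g i := by
  rw [← Finset.sum_filter_add_sum_filter_not Finset.univ (fun i => 0 < lam i) g]
  congr 1
  rw [← Finset.sum_filter_add_sum_filter_not
    (Finset.univ.filter (fun i => ¬ 0 < lam i)) (fun i => lam i < 0) g]
  have e1 : (Finset.univ.filter (fun i => ¬ 0 < lam i)).filter (fun i => lam i < 0)
      = Finset.univ.filter (fun i => lam i < 0) := by
    rw [Finset.filter_filter]
    apply Finset.filter_congr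
    intro i _
    constructor
    · exact fun h => h.2
    · exact fun h => ⟨by linarith, h⟩
  have e2 : ∑ i ∈ (Finset.univ.filter (fun i => ¬ 0 < lam i)).filter (fun i => ¬ lam i < 0), g i
      = 0 := by
    refine Finset.sum_eq_zero fun i hi => ?_
    simp only [Finset.mem_filter] at hi
    exact h0 i (by linarith [not_lt.mp hi.1.2, not_lt.mp hi.2])
  rw [e1, e2, add_zero]

lemma smul_hermitian {n : Type*} [Fintype n] [DecidableEq n] (c : ℝ) {A : Matrix n n ℂ}
    (hA : A.IsHermitian) : ((c : ℂ) • A).IsHermitian := by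
  rw [IsHermitian, conjTranspose_smul, Complex.star_def, Complex.conj_ofReal, hA.eq]

/-- The key upper bound: the causal-effect ratio of any pair of density matrices is bounded by
any bound on orthogonal pure state pairs. -/
lemma key_bound {dA dB : ℕ}
    {N : Matrix (Fin dA) (Fin dA) ℂ →ₗ[ℂ] Matrix (Fin dB) (Fin dB) ℂ}
    (hN : IsQuantumChannel N) {M : ℝ}
    (hM : ∀ a b : Fin dA → ℂ, star a ⬝ᵥ a = 1 → star b ⬝ᵥ b = 1 → star a ⬝ᵥ b = 0 →
      traceNorm (N (vecMulVec a (star a)) - N (vecMulVec b (star b))) ≤ 2 * M)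
    {ρ ρ' : Matrix (Fin dA) (Fin dA) ℂ} (hρ : IsDensityMatrix ρ) (hρ' : IsDensityMatrix ρ')
    (hne : ρ ≠ ρ') :
    traceNorm (N ρ - N ρ') / traceNorm (ρ - ρ') ≤ M := by
  classical
  set Δ := ρ - ρ' with hΔdef
  have hΔherm : Δ.IsHermitian := hρ.1.1.sub hρ'.1.1
  have hΔne : Δ ≠ 0 := sub_ne_zero.mpr hne
  set lam := hΔherm.eigenvalues with hlam
  set v : Fin dA → Fin dA → ℂ :=
    fun i => fun k => (hΔherm.eigenvectorUnitary : Matrix (Fin dA) (Fin dA) ℂ) k i with hv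
  set P : Fin dA → Matrix (Fin dA) (Fin dA) ℂ := fun i => vecMulVec (v i) (star (v i)) with hP
  have hdecomp : Δ = ∑ i, (lam i : ℂ) • P i := spectral_sum hΔherm
  -- eigenvalues sum to zero
  have htrΔ : Δ.trace = 0 := by
    rw [hΔdef, trace_sub, hρ.2, hρ'.2, sub_self]
  have hsum0 : ∑ i, lam i = 0 := by
    have h := spec_trace hΔherm id
    rw [spec_id hΔherm, htrΔ] at h
    exact_mod_cast h.symm
  set Ps := Finset.univ.filter (fun i => 0 < lam i) with hPs
  set Ns := Finset.univ.filter (fun i => lam i < 0) with hNs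
  set t := ∑ i ∈ Ps, lam i with ht
  have hsplit0 : (0:ℝ) = t + ∑ i ∈ Ns, lam i := by
    rw [← hsum0]
    exact sum_split lam lam (fun i h => h)
  have hNsum : ∑ i ∈ Ns, lam i = -t := by linarith
  -- some eigenvalue is nonzero
  have hex : ∃ i, lam i ≠ 0 := by
    by_contra hall
    push_neg at hall
    apply hΔne
    rw [hdecomp]
    refine Finset.sum_eq_zero fun i _ => ?_
    rw [hall i]
    simp
  -- trace norm of Δ
  have hTN : traceNorm Δ = 2 * t := by
    rw [traceNorm_eq_sum_abs_eigenvalues hΔherm, ← hlam]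
    rw [sum_split lam (fun i => |lam i|) (fun i h => by show |lam i| = 0; rw [h, abs_zero])]
    have e1 : ∑ i ∈ Ps, |lam i| = t := by
      refine Finset.sum_congr rfl fun i hi => ?_
      exact abs_of_pos (Finset.mem_filter.mp hi).2
    have e2 : ∑ i ∈ Ns, |lam i| = t := by
      have : ∑ i ∈ Ns, |lam i| = ∑ i ∈ Ns, -lam i := by
        refine Finset.sum_congr rfl fun i hi => ?_
        exact abs_of_neg (Finset.mem_filter.mp hi).2
      rw [this, Finset.sum_neg_distrib, hNsum, neg_neg]
    rw [e1, e2]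
    ring
  have htpos : 0 < t := by
    obtain ⟨i0, hi0⟩ := hex
    have habs : 0 < ∑ i, |lam i| := by
      refine Finset.sum_pos' (fun i _ => abs_nonneg _) ⟨i0, Finset.mem_univ _, abs_pos.mpr hi0⟩
    have : traceNorm Δ = ∑ i, |lam i| := by
      rw [traceNorm_eq_sum_abs_eigenvalues hΔherm]
    linarith [hTN ▸ this ▸ habs]
  -- channel output decomposition
  have hNΔ : N Δ = ∑ i, (lam i : ℂ) • N (P i) := by
    rw [hdecomp, map_sum]
    exact Finset.sum_congr rfl fun i _ => by rw [_root_.map_smul]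
  set c : Fin dA → Fin dA → ℝ := fun i j => lam i * (-lam j) / t with hc
  have hcnn : ∀ i ∈ Ps, ∀ j ∈ Ns, 0 ≤ c i j := by
    intro i hi j hj
    have h1 := (Finset.mem_filter.mp hi).2
    have h2 := (Finset.mem_filter.mp hj).2
    have h3 : 0 ≤ lam i * (-lam j) := mul_nonneg h1.le (by linarith)
    have : c i j = lam i * (-lam j) / t := rfl
    rw [this]
    positivity
  have htne : t ≠ 0 := ne_of_gt htpos
  have hrow : ∀ i, ∑ j ∈ Ns, lam i * -lam j / t = lam i := by
    intro i
    have e : ∑ j ∈ Ns, lam i * -lam j / t = (lam i / t) * ∑ j ∈ Ns, (-lam j) := by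
      rw [Finset.mul_sum]
      exact Finset.sum_congr rfl fun j _ => by ring
    rw [e, Finset.sum_neg_distrib, hNsum, neg_neg]
    field_simp
  have hcol : ∀ j, ∑ i ∈ Ps, lam i * -lam j / t = -lam j := by
    intro j
    have e : ∑ i ∈ Ps, lam i * -lam j / t = (∑ i ∈ Ps, lam i) * (-lam j) / t := by
      rw [Finset.sum_mul, Finset.sum_div]
    rw [e, ← ht]
    field_simp
  -- the convex decomposition of N Δ
  have hNdecomp : N Δ = ∑ p ∈ Ps ×ˢ Ns, ((c p.1 p.2 : ℝ) : ℂ) • (N (P p.1) - N (P p.2)) := by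
    rw [Finset.sum_product]
    have step : ∀ i ∈ Ps, ∑ j ∈ Ns, ((c i j : ℝ) : ℂ) • (N (P i) - N (P j))
        = (lam i : ℂ) • N (P i) - ∑ j ∈ Ns, ((lam i * -lam j / t : ℝ) : ℂ) • N (P j) := by
      intro i hi
      simp only [smul_sub]
      rw [Finset.sum_sub_distrib]
      congr 1
      rw [← Finset.sum_smul]
      congr 1
      have e : ∑ j ∈ Ns, ((c i j : ℝ) : ℂ) = ((∑ j ∈ Ns, c i j : ℝ) : ℂ) := by push_cast; rfl
      rw [e]
      congr 1
      exact hrow i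
    rw [Finset.sum_congr rfl step, Finset.sum_sub_distrib]
    have swap : ∑ i ∈ Ps, ∑ j ∈ Ns, ((lam i * -lam j / t : ℝ) : ℂ) • N (P j)
        = -∑ j ∈ Ns, (lam j : ℂ) • N (P j) := by
      rw [Finset.sum_comm, ← Finset.sum_neg_distrib]
      refine Finset.sum_congr rfl fun j hj => ?_
      rw [← Finset.sum_smul]
      have e : ∑ i ∈ Ps, ((lam i * -lam j / t : ℝ) : ℂ)
          = ((∑ i ∈ Ps, lam i * -lam j / t : ℝ) : ℂ) := by push_cast; rfl
      rw [e, hcol j]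
      push_cast
      rw [neg_smul]
    rw [swap, sub_neg_eq_add, hNΔ]
    exact sum_split lam (fun i => (lam i : ℂ) • N (P i))
      (fun i h => by show (lam i : ℂ) • N (P i) = 0; rw [h]; simp)
  have hHermNP : ∀ i, (N (P i)).IsHermitian :=
    fun i => channel_hermitian hN (vecMulVec_star_hermitian (v i))
  have horthij : ∀ i ∈ Ps, ∀ j ∈ Ns, traceNorm (N (P i) - N (P j)) ≤ 2 * M := by
    intro i hi j hj
    have hij : i ≠ j := by
      intro h
      have h1 := (Finset.mem_filter.mp hi).2
      have h2 := (Finset.mem_filter.mp hj).2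
      rw [h] at h1
      linarith
    have hni : star (v i) ⬝ᵥ (v i) = 1 := by
      have := eigcol_orthonormal hΔherm i i
      rw [if_pos rfl] at this; exact this
    have hnj : star (v j) ⬝ᵥ (v j) = 1 := by
      have := eigcol_orthonormal hΔherm j j
      rw [if_pos rfl] at this; exact this
    have hor : star (v i) ⬝ᵥ (v j) = 0 := by
      have := eigcol_orthonormal hΔherm i j
      rw [if_neg hij] at this; exact this
    exact hM (v i) (v j) hni hnj hor
  have htri : traceNorm (N Δ) ≤ ∑ p ∈ Ps ×ˢ Ns, c p.1 p.2 * traceNorm (N (P p.1) - N (P p.2)) := by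
    rw [hNdecomp]
    calc traceNorm (∑ p ∈ Ps ×ˢ Ns, ((c p.1 p.2 : ℝ) : ℂ) • (N (P p.1) - N (P p.2)))
        ≤ ∑ p ∈ Ps ×ˢ Ns, traceNorm (((c p.1 p.2 : ℝ) : ℂ) • (N (P p.1) - N (P p.2))) :=
          traceNorm_sum_le _ _ (fun p _ => smul_hermitian _ ((hHermNP p.1).sub (hHermNP p.2)))
      _ = ∑ p ∈ Ps ×ˢ Ns, c p.1 p.2 * traceNorm (N (P p.1) - N (P p.2)) := by
          refine Finset.sum_congr rfl fun p hp => ?_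
          have hp' := Finset.mem_product.mp hp
          exact traceNorm_smul _ (hcnn _ hp'.1 _ hp'.2) _
  have hbound : ∑ p ∈ Ps ×ˢ Ns, c p.1 p.2 * traceNorm (N (P p.1) - N (P p.2))
      ≤ ∑ p ∈ Ps ×ˢ Ns, c p.1 p.2 * (2 * M) := by
    refine Finset.sum_le_sum fun p hp => ?_
    have hp' := Finset.mem_product.mp hp
    exact mul_le_mul_of_nonneg_left (horthij _ hp'.1 _ hp'.2) (hcnn _ hp'.1 _ hp'.2)
  have hcsum : ∑ p ∈ Ps ×ˢ Ns, c p.1 p.2 = t := by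
    rw [Finset.sum_product]
    have e : ∀ i ∈ Ps, ∑ j ∈ Ns, c i j = lam i := fun i _ => hrow i
    rw [Finset.sum_congr rfl e]
  have hfinal : traceNorm (N Δ) ≤ 2 * M * t := by
    have e : ∑ p ∈ Ps ×ˢ Ns, c p.1 p.2 * (2 * M) = 2 * M * t := by
      rw [← Finset.sum_mul, hcsum]; ring
    linarith
  have hNρ : N ρ - N ρ' = N Δ := (map_sub N ρ ρ').symm
  rw [hNρ, hTN, div_le_iff₀ (by linarith : (0:ℝ) < 2 * t)]
  calc traceNorm (N Δ) ≤ 2 * M * t := hfinal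
    _ = M * (2 * t) := by ring

end TNaux


namespace TNaux

variable {n : Type*} [Fintype n] [DecidableEq n]

lemma traceNorm_neg (X : Matrix n n ℂ) : traceNorm (-X) = traceNorm X := by
  have h0 := Matrix.posSemidef_conjTranspose_mul_self X
  have hR : (CFC.sqrt (Xᴴ * X)).PosSemidef := Matrix.nonneg_iff_posSemidef.mp (CFC.sqrt_nonneg _)
  have hRsq : CFC.sqrt (Xᴴ * X) ^ 2 = Xᴴ * X := by
    rw [pow_two]; exact CFC.sqrt_mul_sqrt_self _ (Matrix.nonneg_iff_posSemidef.mpr h0)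
  have hsq : CFC.sqrt (Xᴴ * X) ^ 2 = (-X)ᴴ * (-X) := by
    rw [hRsq]
    simp
  rw [traceNorm_eq_of_sq hR hsq, traceNorm_eq_of_sq hR hRsq]

lemma traceNorm_herm_le {A : Matrix n n ℂ} (hA : A.IsHermitian) :
    traceNorm A ≤ Real.sqrt (Fintype.card n) *
      Real.sqrt (∑ i, ∑ j, Complex.normSq (A i j)) := by
  rw [traceNorm_eq_sum_abs_eigenvalues hA]
  have h1 : (∑ i, |hA.eigenvalues i|) ^ 2
      ≤ (Fintype.card n : ℝ) * ∑ i, (hA.eigenvalues i) ^ 2 := by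
    have := sq_sum_le_card_mul_sum_sq (s := (Finset.univ : Finset n))
      (f := fun i => |hA.eigenvalues i|)
    simpa [sq_abs] using this
  have htr1 : (A * A).trace = ((∑ i, (hA.eigenvalues i) ^ 2 : ℝ) : ℂ) := by
    have e : A * A = spec hA (id * id) := by
      rw [← spec_mul]
      exact congrArg₂ (· * ·) (spec_id hA).symm (spec_id hA).symm
    rw [e, spec_trace]
    norm_cast
    exact Finset.sum_congr rfl fun i _ => by simp [Pi.mul_apply, pow_two]
  have htr2 : (A * A).trace = ((∑ i, ∑ j, Complex.normSq (A i j) : ℝ) : ℂ) := by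
    rw [trace]
    push_cast
    refine Finset.sum_congr rfl fun i _ => ?_
    rw [diag_apply, mul_apply]
    refine Finset.sum_congr rfl fun j _ => ?_
    have hji : A j i = star (A i j) := by
      have := congrFun (congrFun hA.eq i) j
      rw [conjTranspose_apply] at this
      rw [← this, star_star]
    rw [hji, Complex.star_def, Complex.mul_conj]
  have h2 : ∑ i, (hA.eigenvalues i) ^ 2 = ∑ i, ∑ j, Complex.normSq (A i j) := by
    have := htr1.symm.trans htr2
    exact_mod_cast this
  have hnn : 0 ≤ ∑ i, |hA.eigenvalues i| := Finset.sum_nonneg fun i _ => abs_nonneg _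
  calc ∑ i, |hA.eigenvalues i| = Real.sqrt ((∑ i, |hA.eigenvalues i|) ^ 2) :=
        (Real.sqrt_sq hnn).symm
    _ ≤ Real.sqrt ((Fintype.card n : ℝ) * ∑ i, (hA.eigenvalues i) ^ 2) :=
        Real.sqrt_le_sqrt h1
    _ = Real.sqrt (Fintype.card n) * Real.sqrt (∑ i, ∑ j, Complex.normSq (A i j)) := by
        rw [h2, Real.sqrt_mul (by positivity)]

lemma star_mul_self_eq_normSq (z : ℂ) : star z * z = (Complex.normSq z : ℂ) := by
  rw [Complex.star_def, mul_comm, Complex.mul_conj]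

lemma entry_norm_le_one {ψ : n → ℂ} (h : star ψ ⬝ᵥ ψ = 1) (i : n) : ‖ψ i‖ ≤ 1 := by
  have h1 : (∑ k, (Complex.normSq (ψ k) : ℂ)) = 1 := by
    rw [← h]
    exact Finset.sum_congr rfl fun k _ => (star_mul_self_eq_normSq (ψ k)).symm
  have h2 : (∑ k, Complex.normSq (ψ k)) = 1 := by exact_mod_cast h1
  have h3 : Complex.normSq (ψ i) ≤ 1 := by
    rw [← h2]
    exact Finset.single_le_sum (fun k _ => Complex.normSq_nonneg _) (Finset.mem_univ i)
  have h4 : ‖ψ i‖ ^ 2 = Complex.normSq (ψ i) := Complex.sq_norm _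
  nlinarith [norm_nonneg (ψ i)]

lemma dot_single (a b : n) :
    star (Pi.single a (1:ℂ)) ⬝ᵥ Pi.single b 1 = if a = b then 1 else 0 := by
  simp [dotProduct, Pi.single_apply, apply_ite, eq_comm]

end TNaux


/-- **The maximum causal effect is attained on orthogonal pure states.**
For every quantum channel `N` from a `dA`-dimensional system (`dA ≥ 2`) to a `dB`-dimensional
system, `CEmax N` is the greatest element of the set of values
`(1/2)·‖N(|ψ⟩⟨ψ|) − N(|ψ⊥⟩⟨ψ⊥|)‖₁` over pairs of orthogonal unit vectors `ψ, ψ⊥`. -/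
theorem CEmax_isGreatest_orthogonal_pure_states {dA dB : ℕ} (hdA : 2 ≤ dA)
    (N : Matrix (Fin dA) (Fin dA) ℂ →ₗ[ℂ] Matrix (Fin dB) (Fin dB) ℂ)
    (hN : IsQuantumChannel N) :
    IsGreatest
      {x : ℝ | ∃ ψ ψp : Fin dA → ℂ,
        star ψ ⬝ᵥ ψ = 1 ∧ star ψp ⬝ᵥ ψp = 1 ∧ star ψ ⬝ᵥ ψp = 0 ∧
        x = traceNorm (N (vecMulVec ψ (star ψ)) - N (vecMulVec ψp (star ψp))) / 2}
      (CEmax N) := by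
  classical
  set T : Set ((Fin dA → ℂ) × (Fin dA → ℂ)) :=
    {p | star p.1 ⬝ᵥ p.1 = 1 ∧ star p.2 ⬝ᵥ p.2 = 1 ∧ star p.1 ⬝ᵥ p.2 = 0} with hT
  set g : ((Fin dA → ℂ) × (Fin dA → ℂ)) → Matrix (Fin dB) (Fin dB) ℂ :=
    fun p => N (vecMulVec p.1 (star p.1)) - N (vecMulVec p.2 (star p.2)) with hg
  set f : ((Fin dA → ℂ) × (Fin dA → ℂ)) → ℝ := fun p => traceNorm (g p) / 2 with hf
  have hSimg : {x : ℝ | ∃ ψ ψp : Fin dA → ℂ,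
      star ψ ⬝ᵥ ψ = 1 ∧ star ψp ⬝ᵥ ψp = 1 ∧ star ψ ⬝ᵥ ψp = 0 ∧
      x = traceNorm (N (vecMulVec ψ (star ψ)) - N (vecMulVec ψp (star ψp))) / 2} = f '' T := by
    ext x
    constructor
    · rintro ⟨ψ, ψp, h1, h2, h3, h4⟩
      exact ⟨(ψ, ψp), ⟨h1, h2, h3⟩, h4.symm⟩
    · rintro ⟨⟨ψ, ψp⟩, ⟨h1, h2, h3⟩, h4⟩
      exact ⟨ψ, ψp, h1, h2, h3, h4.symm⟩
  have hgherm : ∀ p, (g p).IsHermitian := fun p =>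
    (TNaux.channel_hermitian hN (TNaux.vecMulVec_star_hermitian p.1)).sub
      (TNaux.channel_hermitian hN (TNaux.vecMulVec_star_hermitian p.2))
  have hgcont : Continuous g := by
    have hNc : Continuous (fun X : Matrix (Fin dA) (Fin dA) ℂ => N X) :=
      N.continuous_of_finiteDimensional
    have c1 : Continuous (fun p : (Fin dA → ℂ) × (Fin dA → ℂ) => vecMulVec p.1 (star p.1)) :=
      Continuous.matrix_vecMulVec continuous_fst (continuous_star.comp continuous_fst)
    have c2 : Continuous (fun p : (Fin dA → ℂ) × (Fin dA → ℂ) => vecMulVec p.2 (star p.2)) :=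
      Continuous.matrix_vecMulVec continuous_snd (continuous_star.comp continuous_snd)
    exact (hNc.comp c1).sub (hNc.comp c2)
  have hFcont : Continuous (fun p => traceNorm (g p)) := by
    rw [continuous_iff_continuousAt]
    intro x
    set B : ((Fin dA → ℂ) × (Fin dA → ℂ)) → ℝ := fun y =>
      Real.sqrt (Fintype.card (Fin dB)) *
        Real.sqrt (∑ i, ∑ j, Complex.normSq ((g y - g x) i j)) with hB
    have key : ∀ y, |traceNorm (g y) - traceNorm (g x)| ≤ B y := by
      intro y
      have hd : (g y - g x).IsHermitian := (hgherm y).sub (hgherm x)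
      have h1 : traceNorm (g y - g x) ≤ B y := TNaux.traceNorm_herm_le hd
      have h2 : traceNorm (g y) ≤ traceNorm (g y - g x) + traceNorm (g x) := by
        have := TNaux.traceNorm_add_le hd (hgherm x)
        rw [sub_add_cancel] at this
        exact this
      have h3 : traceNorm (g x) ≤ traceNorm (g y - g x) + traceNorm (g y) := by
        have h4 := TNaux.traceNorm_add_le ((hgherm x).sub (hgherm y)) (hgherm y)
        rw [sub_add_cancel] at h4
        have h5 : traceNorm (g x - g y) = traceNorm (g y - g x) := by
          rw [← neg_sub, TNaux.traceNorm_neg]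
        linarith
      rw [abs_sub_le_iff]
      constructor <;> linarith
    have hBcont : Continuous B := by
      apply Continuous.mul continuous_const
      apply Real.continuous_sqrt.comp
      refine continuous_finset_sum _ (fun i _ => continuous_finset_sum _ (fun j _ => ?_))
      exact Complex.continuous_normSq.comp
        (((continuous_apply j).comp ((continuous_apply i).comp (hgcont.sub continuous_const))))
    have hB0 : B x = 0 := by
      rw [hB]
      simp
    have hBtend : Filter.Tendsto B (nhds x) (nhds 0) := by
      have := hBcont.continuousAt (x := x)
      rw [ContinuousAt, hB0] at this
      exact this
    have hsq := squeeze_zero (fun y => abs_nonneg _) key hBtend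
    rw [ContinuousAt, tendsto_iff_dist_tendsto_zero]
    simpa [Real.dist_eq] using hsq
  have hfcont : Continuous f := hFcont.div_const 2
  -- compactness
  have hdot1 : Continuous (fun p : (Fin dA → ℂ) × (Fin dA → ℂ) => star p.1 ⬝ᵥ p.1) := by
    show Continuous (fun p : (Fin dA → ℂ) × (Fin dA → ℂ) => ∑ i, star (p.1 i) * p.1 i)
    refine continuous_finset_sum _ (fun i _ => Continuous.mul ?_ ?_)
    · exact continuous_star.comp ((continuous_apply i).comp continuous_fst)
    · exact (continuous_apply i).comp continuous_fst
  have hdot2 : Continuous (fun p : (Fin dA → ℂ) × (Fin dA → ℂ) => star p.2 ⬝ᵥ p.2) := by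
    show Continuous (fun p : (Fin dA → ℂ) × (Fin dA → ℂ) => ∑ i, star (p.2 i) * p.2 i)
    refine continuous_finset_sum _ (fun i _ => Continuous.mul ?_ ?_)
    · exact continuous_star.comp ((continuous_apply i).comp continuous_snd)
    · exact (continuous_apply i).comp continuous_snd
  have hdot3 : Continuous (fun p : (Fin dA → ℂ) × (Fin dA → ℂ) => star p.1 ⬝ᵥ p.2) := by
    show Continuous (fun p : (Fin dA → ℂ) × (Fin dA → ℂ) => ∑ i, star (p.1 i) * p.2 i)
    refine continuous_finset_sum _ (fun i _ => Continuous.mul ?_ ?_)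
    · exact continuous_star.comp ((continuous_apply i).comp continuous_fst)
    · exact (continuous_apply i).comp continuous_snd
  have hTclosed : IsClosed T := by
    have e : T = {p : (Fin dA → ℂ) × (Fin dA → ℂ) | star p.1 ⬝ᵥ p.1 = 1}
        ∩ ({p | star p.2 ⬝ᵥ p.2 = 1} ∩ {p | star p.1 ⬝ᵥ p.2 = 0}) := rfl
    rw [e]
    exact (isClosed_eq hdot1 continuous_const).inter
      ((isClosed_eq hdot2 continuous_const).inter (isClosed_eq hdot3 continuous_const))
  have hTbdd : Bornology.IsBounded T := by
    apply Bornology.IsBounded.subset (Metric.isBounded_closedBall (x := 0) (r := 1))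
    rintro ⟨ψ, ψp⟩ ⟨h1, h2, h3⟩
    rw [Metric.mem_closedBall, dist_zero_right, Prod.norm_def]
    apply max_le
    · exact pi_norm_le_iff_of_nonneg zero_le_one |>.mpr (TNaux.entry_norm_le_one h1)
    · exact pi_norm_le_iff_of_nonneg zero_le_one |>.mpr (TNaux.entry_norm_le_one h2)
  have hTcompact : IsCompact T := Metric.isCompact_of_isClosed_isBounded hTclosed hTbdd
  -- nonempty
  have h0lt : 0 < dA := by omega
  have h1lt : 1 < dA := by omega
  have hp0 : ((Pi.single (⟨0, h0lt⟩ : Fin dA) (1:ℂ), Pi.single (⟨1, h1lt⟩ : Fin dA) (1:ℂ))) ∈ T := by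
    refine ⟨?_, ?_, ?_⟩
    · rw [TNaux.dot_single]
      simp
    · rw [TNaux.dot_single]
      simp
    · rw [TNaux.dot_single]
      have : (⟨0, h0lt⟩ : Fin dA) ≠ ⟨1, h1lt⟩ := by
        intro h
        exact absurd (Fin.mk.inj_iff.mp h) (by norm_num)
      simp [this]
  have hSc : IsCompact (f '' T) := hTcompact.image hfcont
  have hSne : (f '' T).Nonempty := ⟨f _, Set.mem_image_of_mem f hp0⟩
  set M := sSup (f '' T) with hMdef
  have hMmem : M ∈ f '' T := hSc.sSup_mem hSne
  have hMub : ∀ x ∈ f '' T, x ≤ M := fun x hx => le_csSup hSc.bddAbove hx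
  -- M bounds orthogonal pure pairs
  have hM2 : ∀ a b : Fin dA → ℂ, star a ⬝ᵥ a = 1 → star b ⬝ᵥ b = 1 → star a ⬝ᵥ b = 0 →
      traceNorm (N (vecMulVec a (star a)) - N (vecMulVec b (star b))) ≤ 2 * M := by
    intro a b h1 h2 h3
    have hmem : f (a, b) ∈ f '' T := Set.mem_image_of_mem f ⟨h1, h2, h3⟩
    have hle := hMub _ hmem
    rw [hf] at hle
    simp only at hle
    linarith
  -- CEmax = M
  have hCEub : ∀ x ∈ {x : ℝ | ∃ ρ ρ' : Matrix (Fin dA) (Fin dA) ℂ,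
      IsDensityMatrix ρ ∧ IsDensityMatrix ρ' ∧ ρ ≠ ρ' ∧
      x = traceNorm (N ρ - N ρ') / traceNorm (ρ - ρ')}, x ≤ M := by
    rintro x ⟨ρ, ρ', hρ, hρ', hne, rfl⟩
    exact TNaux.key_bound hN hM2 hρ hρ' hne
  have hCEmem : M ∈ {x : ℝ | ∃ ρ ρ' : Matrix (Fin dA) (Fin dA) ℂ,
      IsDensityMatrix ρ ∧ IsDensityMatrix ρ' ∧ ρ ≠ ρ' ∧
      x = traceNorm (N ρ - N ρ') / traceNorm (ρ - ρ')} := by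
    obtain ⟨⟨ψ, ψp⟩, ⟨h1, h2, h3⟩, hfx⟩ := hMmem
    refine ⟨vecMulVec ψ (star ψ), vecMulVec ψp (star ψp), TNaux.pure_density h1,
      TNaux.pure_density h2, TNaux.pure_ne h1 h3, ?_⟩
    rw [TNaux.traceNorm_orth_pure_diff h1 h2 h3, ← hfx]
  have hCE : CEmax N = M := by
    rw [CEmax]
    exact IsGreatest.csSup_eq ⟨hCEmem, hCEub⟩
  rw [hCE, hSimg]
  exact ⟨hMmem, fun x hx => hMub x hx⟩
end

section
/- Continuity of the maximum causal effect: let N and N' be quantum channels from a d_A-dimensional system A (with d_A ≥ 2) to a d_B-dimensional system B. If ‖N(ρ) − N'(ρ)‖₁ ≤ ε for every density matrix ρ on A, then |CE_max(N) − CE_max(N')| ≤ ε. -/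
open Matrix ComplexOrder

open scoped MatrixOrder

lemma traceNorm_eq_trace_sqrt {n : Type*} [Fintype n] [DecidableEq n] (X : Matrix n n ℂ) :
    traceNorm X = (CFC.sqrt (Xᴴ * X)).trace.re := by
  rw [CFC.sqrt_eq_cfc, cfc_nnreal_eq_real _ _ (posSemidef_conjTranspose_mul_self X).nonneg,
    (posSemidef_conjTranspose_mul_self X).1.cfc_eq, traceNorm]
  simp only [IsHermitian.cfc, Unitary.conjStarAlgAut_apply]
  congr
  funext i
  simp only [Function.comp_apply, Real.coe_sqrt, Real.coe_toNNReal']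
  rcases le_total 0 i with h | h
  · rw [max_eq_left h]
  · rw [max_eq_right h, Real.sqrt_zero, Real.sqrt_eq_zero'.mpr h]

lemma traceNorm_of_sq {n : Type*} [Fintype n] [DecidableEq n] {X S : Matrix n n ℂ}
    (hS : S.PosSemidef) (h : S ^ 2 = Xᴴ * X) : traceNorm X = S.trace.re := by
  rw [traceNorm_eq_trace_sqrt, CFC.sqrt_unique (by rw [← sq]; exact h) hS.nonneg]

section Aux

variable {n : Type*} [Fintype n] [DecidableEq n]

lemma star_mul_self' (U : Matrix.unitaryGroup n ℂ) :
    star (U : Matrix n n ℂ) * (U : Matrix n n ℂ) = 1 := by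
  exact_mod_cast U.2.1

lemma mul_star_self' (U : Matrix.unitaryGroup n ℂ) :
    (U : Matrix n n ℂ) * star (U : Matrix n n ℂ) = 1 := by
  exact_mod_cast U.2.2

/-- conjugation by a unitary -/
noncomputable def conjD (U : Matrix.unitaryGroup n ℂ) (d : n → ℝ) : Matrix n n ℂ :=
  (U : Matrix n n ℂ) * diagonal (fun i => (d i : ℂ)) * star (U : Matrix n n ℂ)

lemma conjD_mul (U : Matrix.unitaryGroup n ℂ) (a b : n → ℝ) :
    conjD U a * conjD U b = conjD U (fun i => a i * b i) := by
  simp only [conjD, Matrix.mul_assoc]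
  rw [← Matrix.mul_assoc (star (U : Matrix n n ℂ)), star_mul_self' U, Matrix.one_mul,
    ← Matrix.mul_assoc (diagonal _), diagonal_mul_diagonal]
  congr 2
  funext i
  push_cast
  rfl

lemma conjD_posSemidef (U : Matrix.unitaryGroup n ℂ) (d : n → ℝ) (hd : ∀ i, 0 ≤ d i) :
    (conjD U d).PosSemidef := by
  have h : (diagonal (fun i => (d i : ℂ))).PosSemidef := by
    refine posSemidef_diagonal_iff.mpr fun i => ?_
    exact Complex.zero_le_real.mpr (hd i)
  simpa [conjD, Matrix.mul_assoc, star_eq_conjTranspose] using h.mul_mul_conjTranspose_same (U : Matrix n n ℂ)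

lemma conjD_trace (U : Matrix.unitaryGroup n ℂ) (d : n → ℝ) :
    (conjD U d).trace = ∑ i, (d i : ℂ) := by
  rw [conjD, trace_mul_cycle, star_mul_self' U, Matrix.one_mul, trace_diagonal]

lemma conjD_isHermitian (U : Matrix.unitaryGroup n ℂ) (d : n → ℝ) :
    (conjD U d).IsHermitian := by
  show _ = _
  rw [conjD, star_eq_conjTranspose, conjTranspose_mul, conjTranspose_mul,
    conjTranspose_conjTranspose, diagonal_conjTranspose]
  have : (star fun i => ((d i : ℂ))) = fun i => (d i : ℂ) := by
    funext i; simp [Complex.conj_ofReal]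
  rw [this, Matrix.mul_assoc]

lemma traceNorm_conjD (U : Matrix.unitaryGroup n ℂ) (d : n → ℝ) :
    traceNorm (conjD U d) = ∑ i, |d i| := by
  have hXX : (conjD U d)ᴴ * conjD U d = conjD U (fun i => |d i| * |d i|) := by
    rw [(conjD_isHermitian U d).eq, conjD_mul]
    funext i
    simp [abs_mul_abs_self]
  have hS : (conjD U (fun i => |d i|)).PosSemidef :=
    conjD_posSemidef U _ (fun i => abs_nonneg _)
  have hsq : conjD U (fun i => |d i|) ^ 2 = (conjD U d)ᴴ * conjD U d := by
    rw [pow_two, conjD_mul, hXX]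
  rw [traceNorm_of_sq hS hsq, conjD_trace]
  simp

lemma trace_mul_diagonal' (A : Matrix n n ℂ) (d : n → ℂ) :
    (A * diagonal d).trace = ∑ i, A i i * d i := by
  simp [Matrix.trace, Matrix.diag, Matrix.mul_diagonal]

lemma conjD_apply_same (M : Matrix.unitaryGroup n ℂ) (s : n → ℝ) (i : n) :
    ((conjD M s) i i).re = ∑ j, s j * Complex.normSq ((M : Matrix n n ℂ) i j) := by
  have : (conjD M s) i i
      = ∑ j, (s j : ℂ) * ((M : Matrix n n ℂ) i j * star ((M : Matrix n n ℂ) i j)) := by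
    rw [conjD, Matrix.mul_apply]
    refine Finset.sum_congr rfl fun j _ => ?_
    rw [Matrix.mul_diagonal, star_eq_conjTranspose, conjTranspose_apply]
    ring
  rw [this, Complex.re_sum]
  refine Finset.sum_congr rfl fun j _ => ?_
  rw [RCLike.star_def, Complex.mul_conj, ← Complex.ofReal_mul, Complex.ofReal_re]

lemma re_conjD_diag_le (M : Matrix.unitaryGroup n ℂ) (s : n → ℝ) (hs : ∀ i, |s i| ≤ 1)
    (i : n) : |((conjD M s) i i).re| ≤ 1 := by
  have hrow : ∑ j, Complex.normSq ((M : Matrix n n ℂ) i j) = 1 := by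
    have h1 : ((M : Matrix n n ℂ) * star (M : Matrix n n ℂ)) i i = 1 := by
      rw [mul_star_self']; simp
    rw [Matrix.mul_apply] at h1
    have h2 : ∀ j, (M : Matrix n n ℂ) i j * (star (M : Matrix n n ℂ)) j i
        = (Complex.normSq ((M : Matrix n n ℂ) i j) : ℂ) := fun j => by
      rw [Matrix.star_apply, RCLike.star_def, Complex.mul_conj]
    simp_rw [h2] at h1
    exact_mod_cast h1
  rw [conjD_apply_same]
  calc |∑ j, s j * Complex.normSq ((M : Matrix n n ℂ) i j)|
      ≤ ∑ j, |s j * Complex.normSq ((M : Matrix n n ℂ) i j)| := Finset.abs_sum_le_sum_abs _ _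
    _ ≤ ∑ j, Complex.normSq ((M : Matrix n n ℂ) i j) := by
        refine Finset.sum_le_sum fun j _ => ?_
        rw [abs_mul, abs_of_nonneg (Complex.normSq_nonneg _)]
        exact mul_le_of_le_one_left (Complex.normSq_nonneg _) (hs j)
    _ = 1 := hrow

lemma isHermitian_eq_conjD {W : Matrix n n ℂ} (hW : W.IsHermitian) :
    W = conjD hW.eigenvectorUnitary hW.eigenvalues :=
  hW.spectral_theorem

lemma traceNorm_of_isHermitian {W : Matrix n n ℂ} (hW : W.IsHermitian) :
    traceNorm W = ∑ i, |hW.eigenvalues i| := by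
  conv_lhs => rw [isHermitian_eq_conjD hW]
  exact traceNorm_conjD _ _

lemma re_trace_conjD_mul_le (U V : Matrix.unitaryGroup n ℂ) (s ν : n → ℝ)
    (hs : ∀ i, |s i| ≤ 1) :
    ((conjD U s * conjD V ν).trace).re ≤ ∑ i, |ν i| := by
  set M : Matrix.unitaryGroup n ℂ := star V * U with hM
  have key : conjD U s * conjD V ν
      = (V : Matrix n n ℂ) * (conjD M s * diagonal (fun i => (ν i : ℂ)))
        * star (V : Matrix n n ℂ) := by
    simp only [conjD, hM, Submonoid.coe_mul, Unitary.coe_star, StarMul.star_mul, star_star]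
    simp only [Matrix.mul_assoc]
    rw [← Matrix.mul_assoc (V : Matrix n n ℂ) (star (V : Matrix n n ℂ)), mul_star_self',
      Matrix.one_mul]
  rw [key, trace_mul_cycle, ← Matrix.mul_assoc, star_mul_self' V, Matrix.one_mul,
    trace_mul_diagonal', Complex.re_sum]
  calc ∑ i, ((conjD M s) i i * (ν i : ℂ)).re
      = ∑ i, ((conjD M s) i i).re * ν i := by
        refine Finset.sum_congr rfl fun i _ => ?_
        rw [mul_comm (conjD M s i i), Complex.re_ofReal_mul, mul_comm]
    _ ≤ ∑ i, |ν i| := by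
        refine Finset.sum_le_sum fun i _ => ?_
        calc ((conjD M s) i i).re * ν i ≤ |((conjD M s) i i).re * ν i| := le_abs_self _
          _ = |((conjD M s) i i).re| * |ν i| := abs_mul _ _
          _ ≤ 1 * |ν i| :=
              mul_le_mul_of_nonneg_right (re_conjD_diag_le M s hs i) (abs_nonneg _)
          _ = |ν i| := one_mul _

lemma traceNorm_triangle_herm {X Y : Matrix n n ℂ} (hX : X.IsHermitian) (hY : Y.IsHermitian) :
    traceNorm (X + Y) ≤ traceNorm X + traceNorm Y := by
  have hZ : (X + Y).IsHermitian := hX.add hY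
  set U := hZ.eigenvectorUnitary with hU
  set μ := hZ.eigenvalues with hμ
  set s : n → ℝ := fun i => if 0 ≤ μ i then 1 else -1 with hs
  have hs1 : ∀ i, |s i| ≤ 1 := by
    intro i; rw [hs]; dsimp only; split <;> simp
  have hmain : traceNorm (X + Y) = ((conjD U s * (X + Y)).trace).re := by
    conv_lhs => rw [isHermitian_eq_conjD hZ]
    rw [traceNorm_conjD]
    conv_rhs => rw [isHermitian_eq_conjD hZ]
    rw [conjD_mul, conjD_trace, Complex.re_sum]
    refine Finset.sum_congr rfl fun i _ => ?_
    rw [Complex.ofReal_re, hs]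
    dsimp only
    split_ifs with h
    · rw [one_mul, abs_of_nonneg h]
    · rw [neg_one_mul, abs_of_neg (lt_of_not_ge h)]
  rw [hmain, Matrix.mul_add, trace_add, Complex.add_re]
  have bX : ((conjD U s * X).trace).re ≤ traceNorm X := by
    conv_lhs => rw [isHermitian_eq_conjD hX]
    rw [traceNorm_of_isHermitian hX]
    exact re_trace_conjD_mul_le U _ s _ hs1
  have bY : ((conjD U s * Y).trace).re ≤ traceNorm Y := by
    conv_lhs => rw [isHermitian_eq_conjD hY]
    rw [traceNorm_of_isHermitian hY]
    exact re_trace_conjD_mul_le U _ s _ hs1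
  exact add_le_add bX bY

lemma traceNorm_eq_of_sq_eq {X Y : Matrix n n ℂ} (h : Xᴴ * X = Yᴴ * Y) :
    traceNorm X = traceNorm Y := by
  rw [traceNorm_eq_trace_sqrt, traceNorm_eq_trace_sqrt, h]

lemma traceNorm_neg (X : Matrix n n ℂ) : traceNorm (-X) = traceNorm X :=
  traceNorm_eq_of_sq_eq (by simp)

lemma traceNorm_smul (X : Matrix n n ℂ) (c : ℝ) (hc : 0 ≤ c) :
    traceNorm ((c : ℂ) • X) = c * traceNorm X := by
  have hS := (CFC.sqrt_nonneg (Xᴴ * X)).posSemidef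
  have hcS : ((c : ℂ) • CFC.sqrt (Xᴴ * X)).PosSemidef := by
    have h2 : ((Real.sqrt c : ℂ) • (1 : Matrix n n ℂ)) *
        CFC.sqrt (Xᴴ * X) *
        ((Real.sqrt c : ℂ) • (1 : Matrix n n ℂ))ᴴ
        = (c : ℂ) • CFC.sqrt (Xᴴ * X) := by
      rw [conjTranspose_smul, conjTranspose_one]
      rw [Matrix.smul_mul, Matrix.one_mul, Matrix.mul_smul, Matrix.mul_one, smul_smul]
      congr 1
      rw [RCLike.star_def, Complex.conj_ofReal, ← Complex.ofReal_mul,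
        Real.mul_self_sqrt hc]
    rw [← h2]
    exact hS.mul_mul_conjTranspose_same _
  have hsq : ((c : ℂ) • CFC.sqrt (Xᴴ * X)) ^ 2
      = ((c : ℂ) • X)ᴴ * ((c : ℂ) • X) := by
    rw [smul_pow, CFC.sq_sqrt (Xᴴ * X) (posSemidef_conjTranspose_mul_self X).nonneg, conjTranspose_smul,
      Matrix.smul_mul, Matrix.mul_smul, smul_smul]
    congr 1
    rw [RCLike.star_def, Complex.conj_ofReal]
    ring
  rw [traceNorm_of_sq hcS hsq, trace_smul, smul_eq_mul, Complex.mul_re, Complex.ofReal_re,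
    Complex.ofReal_im, traceNorm_eq_trace_sqrt]
  ring
section part3
variable {n : Type*} [Fintype n] [DecidableEq n]

lemma conjD_sub (U : Matrix.unitaryGroup n ℂ) (a b : n → ℝ) :
    conjD U a - conjD U b = conjD U (fun i => a i - b i) := by
  unfold conjD
  rw [← Matrix.sub_mul, ← Matrix.mul_sub, diagonal_sub]
  congr 2
  funext i
  push_cast
  rfl

lemma conjD_smul (U : Matrix.unitaryGroup n ℂ) (d : n → ℝ) (t : ℝ) :
    (t : ℂ) • conjD U d = conjD U (fun i => t * d i) := by
  unfold conjD
  rw [← Matrix.smul_mul, ← Matrix.mul_smul]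
  congr 2
  funext j i
  simp only [Matrix.smul_apply, diagonal, of_apply, smul_eq_mul]
  split_ifs <;> push_cast <;> ring

lemma traceNorm_nonneg_herm {X : Matrix n n ℂ} (hX : X.IsHermitian) :
    0 ≤ traceNorm X := by
  rw [traceNorm_of_isHermitian hX]
  exact Finset.sum_nonneg fun i _ => abs_nonneg _

/-- Key normalization lemma (Jordan decomposition of the traceless difference). -/
lemma exists_normalized {ρ ρ' : Matrix n n ℂ} (hρ : IsDensityMatrix ρ)
    (hρ' : IsDensityMatrix ρ') (hne : ρ ≠ ρ') :
    ∃ σ σ' : Matrix n n ℂ, IsDensityMatrix σ ∧ IsDensityMatrix σ' ∧ σ ≠ σ' ∧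
      traceNorm (σ - σ') = 2 ∧ ∃ t : ℝ, 0 < t ∧ ρ - ρ' = (t : ℂ) • (σ - σ') := by
  have hX : (ρ - ρ').IsHermitian := hρ.1.1.sub hρ'.1.1
  set U := hX.eigenvectorUnitary with hU
  set lam := hX.eigenvalues with hlam
  have hspec : ρ - ρ' = conjD U lam := isHermitian_eq_conjD hX
  have htr0 : ∑ i, lam i = 0 := by
    have h1 : (ρ - ρ').trace = 0 := by
      rw [trace_sub, hρ.2, hρ'.2, sub_self]
    rw [hspec, conjD_trace] at h1
    exact_mod_cast h1
  set dp : n → ℝ := fun i => max (lam i) 0 with hdp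
  set dm : n → ℝ := fun i => max (-lam i) 0 with hdm
  have hsub : ∀ i, dp i - dm i = lam i := by
    intro i
    simp only [hdp, hdm]
    rcases le_total (lam i) 0 with h | h
    · rw [max_eq_right h, max_eq_left (by linarith)]; ring
    · rw [max_eq_left h, max_eq_right (by linarith)]; ring
  have habs : ∀ i, dp i + dm i = |lam i| := by
    intro i
    simp only [hdp, hdm]
    rcases le_total (lam i) 0 with h | h
    · rw [max_eq_right h, max_eq_left (by linarith), abs_of_nonpos h]; ring
    · rw [max_eq_left h, max_eq_right (by linarith), abs_of_nonneg h]; ring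
  set t : ℝ := ∑ i, dp i with ht
  have hdp0 : ∀ i, 0 ≤ dp i := fun i => le_max_right _ _
  have hdm0 : ∀ i, 0 ≤ dm i := fun i => le_max_right _ _
  have htm : ∑ i, dm i = t := by
    have : ∑ i, (dp i - dm i) = 0 := by rw [Finset.sum_congr rfl fun i _ => hsub i]; exact htr0
    rw [Finset.sum_sub_distrib] at this
    linarith
  have ht0 : 0 ≤ t := Finset.sum_nonneg fun i _ => hdp0 i
  have htpos : 0 < t := by
    rcases ht0.lt_or_eq with h | h
    · exact h
    · exfalso
      have hdp_zero : ∀ i ∈ Finset.univ, dp i = 0 :=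
        (Finset.sum_eq_zero_iff_of_nonneg (fun i _ => hdp0 i)).mp h.symm
      have hdm_zero : ∀ i ∈ Finset.univ, dm i = 0 :=
        (Finset.sum_eq_zero_iff_of_nonneg (fun i _ => hdm0 i)).mp (htm.trans h.symm)
      have hlam0 : ∀ i, lam i = 0 := fun i => by
        have := hsub i
        rw [hdp_zero i (Finset.mem_univ i), hdm_zero i (Finset.mem_univ i)] at this
        linarith
      apply hne
      have : ρ - ρ' = 0 := by
        rw [hspec]
        unfold conjD
        have : (diagonal fun i => ((lam i : ℝ) : ℂ)) = 0 := by
          have : (fun i => ((lam i : ℝ) : ℂ)) = fun _ => 0 := by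
            funext i; rw [hlam0 i]; simp
          rw [this, diagonal_zero]
        rw [this, Matrix.mul_zero, Matrix.zero_mul]
      exact sub_eq_zero.mp this
  have hfun : (fun i => t * (dp i / t - dm i / t)) = lam := by
    funext i
    rw [mul_comm, div_sub_div_same, hsub i, div_mul_cancel₀ _ (ne_of_gt htpos)]
  refine ⟨conjD U (fun i => dp i / t), conjD U (fun i => dm i / t), ?_, ?_, ?_, ?_, t, htpos, ?_⟩
  · exact ⟨conjD_posSemidef U _ (fun i => div_nonneg (hdp0 i) ht0),
      by rw [conjD_trace]
         norm_cast
         rw [← Finset.sum_div, ← ht, div_self (ne_of_gt htpos)]⟩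
  · exact ⟨conjD_posSemidef U _ (fun i => div_nonneg (hdm0 i) ht0),
      by rw [conjD_trace]
         norm_cast
         rw [← Finset.sum_div, htm, div_self (ne_of_gt htpos)]⟩
  · intro hcon
    apply hne
    have hd : conjD U (fun i => dp i / t) - conjD U (fun i => dm i / t) = 0 := by
      rw [hcon, sub_self]
    rw [conjD_sub] at hd
    have : ρ - ρ' = (t : ℂ) • conjD U (fun i => dp i / t - dm i / t) := by
      rw [conjD_smul, hfun]
      exact hspec
    rw [hd, smul_zero] at this
    exact sub_eq_zero.mp this
  · rw [conjD_sub, traceNorm_conjD]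
    have : ∀ i, |dp i / t - dm i / t| = |lam i| / t := by
      intro i
      rw [div_sub_div_same, hsub i, abs_div, abs_of_pos htpos]
    rw [Finset.sum_congr rfl fun i _ => this i, ← Finset.sum_div]
    have hsum : ∑ i, |lam i| = 2 * t := by
      rw [← Finset.sum_congr rfl fun i _ => habs i, Finset.sum_add_distrib, ← ht, htm]; ring
    rw [hsum]
    field_simp
  · rw [conjD_sub, conjD_smul, hfun]
    exact hspec

end part3

section part4
variable {n : Type*} [Fintype n] [DecidableEq n]

lemma traceNorm_posSemidef {P : Matrix n n ℂ} (hP : P.PosSemidef) :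
    traceNorm P = P.trace.re := by
  rw [traceNorm_of_sq hP (by rw [pow_two]; rw [hP.1.eq])]

lemma density_traceNorm {ρ : Matrix n n ℂ} (hρ : IsDensityMatrix ρ) : traceNorm ρ = 1 := by
  rw [traceNorm_posSemidef hρ.1, hρ.2, Complex.one_re]

lemma traceNorm_sub_le_herm {X Y : Matrix n n ℂ} (hX : X.IsHermitian) (hY : Y.IsHermitian) :
    traceNorm (X - Y) ≤ traceNorm X + traceNorm Y := by
  rw [sub_eq_add_neg]
  calc traceNorm (X + -Y) ≤ traceNorm X + traceNorm (-Y) :=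
        traceNorm_triangle_herm hX hY.neg
    _ = traceNorm X + traceNorm Y := by rw [traceNorm_neg]

end part4

lemma channel_density {dA dB : ℕ}
    {N : Matrix (Fin dA) (Fin dA) ℂ →ₗ[ℂ] Matrix (Fin dB) (Fin dB) ℂ}
    (hN : IsQuantumChannel N) {ρ : Matrix (Fin dA) (Fin dA) ℂ}
    (hρ : IsDensityMatrix ρ) : IsDensityMatrix (N ρ) := by
  obtain ⟨k, K, hK, hsum⟩ := hN
  constructor
  · rw [hK]
    exact Finset.sum_induction _ Matrix.PosSemidef (fun a b ha hb => ha.add hb)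
      Matrix.PosSemidef.zero (fun i _ => hρ.1.mul_mul_conjTranspose_same (K i))
  · rw [hK, trace_sum]
    have h1 : ∀ i : Fin k, (K i * ρ * (K i)ᴴ).trace = ((K i)ᴴ * K i * ρ).trace :=
      fun i => trace_mul_cycle (K i) ρ (K i)ᴴ
    rw [Finset.sum_congr rfl fun i _ => h1 i, ← trace_sum, ← Finset.sum_mul, hsum,
      Matrix.one_mul, hρ.2]

lemma ratio_eq {dA dB : ℕ}
    (M : Matrix (Fin dA) (Fin dA) ℂ →ₗ[ℂ] Matrix (Fin dB) (Fin dB) ℂ)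
    {ρ ρ' σ σ' : Matrix (Fin dA) (Fin dA) ℂ} {t : ℝ} (ht : 0 < t)
    (hd : ρ - ρ' = (t : ℂ) • (σ - σ')) (h2 : traceNorm (σ - σ') = 2) :
    traceNorm (M ρ - M ρ') / traceNorm (ρ - ρ')
      = traceNorm (M σ - M σ') / 2 := by
  have h1 : M ρ - M ρ' = (t : ℂ) • (M σ - M σ') := by
    rw [← map_sub, hd, _root_.map_smul, map_sub]
  have hden : traceNorm (ρ - ρ') = t * 2 := by
    rw [hd, traceNorm_smul _ t ht.le, h2]
  rw [h1, traceNorm_smul _ t ht.le, hden, mul_div_mul_left _ _ (ne_of_gt ht)]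

lemma mem_le_one {dA dB : ℕ}
    {M : Matrix (Fin dA) (Fin dA) ℂ →ₗ[ℂ] Matrix (Fin dB) (Fin dB) ℂ}
    (hM : IsQuantumChannel M) {x : ℝ}
    (hx : x ∈ {x : ℝ | ∃ ρ ρ' : Matrix (Fin dA) (Fin dA) ℂ,
      IsDensityMatrix ρ ∧ IsDensityMatrix ρ' ∧ ρ ≠ ρ' ∧
      x = traceNorm (M ρ - M ρ') / traceNorm (ρ - ρ')}) : x ≤ 1 := by
  obtain ⟨ρ, ρ', hρ, hρ', hne, rfl⟩ := hx
  obtain ⟨σ, σ', hσ, hσ', hneq, h2, t, ht, hd⟩ := exists_normalized hρ hρ' hne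
  rw [ratio_eq M ht hd h2]
  have hb : traceNorm (M σ - M σ') ≤ 2 := by
    calc traceNorm (M σ - M σ') ≤ traceNorm (M σ) + traceNorm (M σ') :=
          traceNorm_sub_le_herm (channel_density hM hσ).1.1 (channel_density hM hσ').1.1
      _ = 2 := by
          rw [density_traceNorm (channel_density hM hσ),
            density_traceNorm (channel_density hM hσ')]; norm_num
  linarith

lemma mem_nonneg {dA dB : ℕ}
    {M : Matrix (Fin dA) (Fin dA) ℂ →ₗ[ℂ] Matrix (Fin dB) (Fin dB) ℂ}
    (hM : IsQuantumChannel M) {x : ℝ}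
    (hx : x ∈ {x : ℝ | ∃ ρ ρ' : Matrix (Fin dA) (Fin dA) ℂ,
      IsDensityMatrix ρ ∧ IsDensityMatrix ρ' ∧ ρ ≠ ρ' ∧
      x = traceNorm (M ρ - M ρ') / traceNorm (ρ - ρ')}) : 0 ≤ x := by
  obtain ⟨ρ, ρ', hρ, hρ', hne, rfl⟩ := hx
  exact div_nonneg
    (traceNorm_nonneg_herm ((channel_density hM hρ).1.1.sub (channel_density hM hρ').1.1))
    (traceNorm_nonneg_herm (hρ.1.1.sub hρ'.1.1))

lemma basic_density {dA : ℕ} (i : Fin dA) :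
    IsDensityMatrix (diagonal (fun j => if j = i then (1 : ℂ) else 0)) := by
  constructor
  · refine posSemidef_diagonal_iff.mpr fun j => ?_
    split_ifs
    · exact zero_le_one
    · exact le_refl 0
  · rw [trace_diagonal]
    simp

lemma CEmax_le_aux {dA dB : ℕ} (hdA : 2 ≤ dA) (ε : ℝ)
    (N N' : Matrix (Fin dA) (Fin dA) ℂ →ₗ[ℂ] Matrix (Fin dB) (Fin dB) ℂ)
    (hN : IsQuantumChannel N) (hN' : IsQuantumChannel N')
    (hclose : ∀ ρ : Matrix (Fin dA) (Fin dA) ℂ, IsDensityMatrix ρ →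
      traceNorm (N ρ - N' ρ) ≤ ε) :
    CEmax N ≤ CEmax N' + ε := by
  set i0 : Fin dA := ⟨0, by omega⟩ with hi0
  set i1 : Fin dA := ⟨1, by omega⟩ with hi1
  set ρ0 := diagonal (fun j => if j = i0 then (1 : ℂ) else 0) with hρ0def
  set ρ1 := diagonal (fun j => if j = i1 then (1 : ℂ) else 0) with hρ1def
  have hρ0 := basic_density i0
  have hρ1 := basic_density i1
  have hne01 : ρ0 ≠ ρ1 := by
    intro h
    have h2 := congrFun (congrFun h i0) i0
    rw [hρ0def, hρ1def, diagonal_apply_eq, diagonal_apply_eq] at h2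
    have h01 : i0 ≠ i1 := by
      rw [hi0, hi1]
      intro hc
      have := congrArg Fin.val hc
      simp at this
    rw [if_pos rfl, if_neg h01] at h2
    exact one_ne_zero h2
  have hε : 0 ≤ ε :=
    le_trans (traceNorm_nonneg_herm
      ((channel_density hN hρ0).1.1.sub (channel_density hN' hρ0).1.1)) (hclose ρ0 hρ0)
  set S' := {x : ℝ | ∃ ρ ρ' : Matrix (Fin dA) (Fin dA) ℂ,
      IsDensityMatrix ρ ∧ IsDensityMatrix ρ' ∧ ρ ≠ ρ' ∧
      x = traceNorm (N' ρ - N' ρ') / traceNorm (ρ - ρ')} with hS'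
  have hbdd : BddAbove S' := ⟨1, fun x hx => mem_le_one hN' hx⟩
  have hy0 : traceNorm (N' ρ0 - N' ρ1) / traceNorm (ρ0 - ρ1) ∈ S' :=
    ⟨ρ0, ρ1, hρ0, hρ1, hne01, rfl⟩
  have h0 : (0 : ℝ) ≤ CEmax N' :=
    le_trans (mem_nonneg hN' hy0) (le_csSup hbdd hy0)
  apply Real.sSup_le _ (by linarith)
  rintro x ⟨ρ, ρ', hρ, hρ', hne, rfl⟩
  obtain ⟨σ, σ', hσ, hσ', hneq, h2, t, ht, hd⟩ := exists_normalized hρ hρ' hne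
  rw [ratio_eq N ht hd h2]
  have hherm1 : (N σ - N' σ).IsHermitian :=
    (channel_density hN hσ).1.1.sub (channel_density hN' hσ).1.1
  have hherm2 : (N' σ - N' σ').IsHermitian :=
    (channel_density hN' hσ).1.1.sub (channel_density hN' hσ').1.1
  have hherm3 : (N' σ' - N σ').IsHermitian :=
    (channel_density hN' hσ').1.1.sub (channel_density hN hσ').1.1
  have key : traceNorm (N σ - N σ') ≤ traceNorm (N' σ - N' σ') + (ε + ε) := by
    have e1 : N σ - N σ' = (N σ - N' σ) + ((N' σ - N' σ') + (N' σ' - N σ')) := by abel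
    have c3 : traceNorm (N' σ' - N σ') ≤ ε := by
      rw [show N' σ' - N σ' = -(N σ' - N' σ') from (neg_sub _ _).symm, traceNorm_neg]
      exact hclose σ' hσ'
    calc traceNorm (N σ - N σ')
        ≤ traceNorm (N σ - N' σ) + traceNorm ((N' σ - N' σ') + (N' σ' - N σ')) := by
          rw [e1]; exact traceNorm_triangle_herm hherm1 (hherm2.add hherm3)
      _ ≤ traceNorm (N σ - N' σ) + (traceNorm (N' σ - N' σ') + traceNorm (N' σ' - N σ')) :=
          add_le_add_right (traceNorm_triangle_herm hherm2 hherm3) _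
      _ ≤ traceNorm (N' σ - N' σ') + (ε + ε) := by
          have := hclose σ hσ
          linarith
  have hy : traceNorm (N' σ - N' σ') / traceNorm (σ - σ') ∈ S' :=
    ⟨σ, σ', hσ, hσ', hneq, rfl⟩
  have hy2 : traceNorm (N' σ - N' σ') / 2 ≤ CEmax N' := by
    have := le_csSup hbdd hy
    rw [h2] at this
    exact this
  calc traceNorm (N σ - N σ') / 2 ≤ (traceNorm (N' σ - N' σ') + (ε + ε)) / 2 := by linarith
    _ = traceNorm (N' σ - N' σ') / 2 + ε := by ring
    _ ≤ CEmax N' + ε := by linarith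



end Aux

/-- **Continuity of the maximum causal effect.**
If two quantum channels `N, N' : A → B` (`dA ≥ 2`) satisfy `‖N ρ − N' ρ‖₁ ≤ ε` for every
density matrix `ρ`, then `|CEmax N − CEmax N'| ≤ ε`. -/
theorem CEmax_continuity {dA dB : ℕ} (hdA : 2 ≤ dA) (ε : ℝ)
    (N N' : Matrix (Fin dA) (Fin dA) ℂ →ₗ[ℂ] Matrix (Fin dB) (Fin dB) ℂ)
    (hN : IsQuantumChannel N) (hN' : IsQuantumChannel N')
    (hclose : ∀ ρ : Matrix (Fin dA) (Fin dA) ℂ, IsDensityMatrix ρ →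
      traceNorm (N ρ - N' ρ) ≤ ε) :
    |CEmax N - CEmax N'| ≤ ε := by
  have hclose' : ∀ ρ : Matrix (Fin dA) (Fin dA) ℂ, IsDensityMatrix ρ →
      traceNorm (N' ρ - N ρ) ≤ ε := by
    intro ρ hρ
    rw [show N' ρ - N ρ = -(N ρ - N' ρ) from (neg_sub _ _).symm, traceNorm_neg]
    exact hclose ρ hρ
  rw [abs_sub_le_iff]
  constructor
  · have := CEmax_le_aux hdA ε N N' hN hN' hclose
    linarith
  · have := CEmax_le_aux hdA ε N' N hN' hN hclose'
    linarith
end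

section
/- Let M be a Hermitian-preserving linear map from d_A×d_A complex matrices to d_B×d_B complex matrices (i.e., M(Xᴴ) = M(X)ᴴ for all X), and let ‖M‖₁ := sup over nonzero d_A×d_A matrices O of ‖M(O)‖₁/‖O‖₁ be its induced trace norm. Then for every finite dimension d_E and every unit vector Ψ ∈ ℂ^{d_A} ⊗ ℂ^{d_E}, one has ‖(M ⊗ id_E)(|Ψ⟩⟨Ψ|)‖₁ ≤ d_A·‖M‖₁, where M ⊗ id_E acts as M on the first tensor factor and as the identity on the second. -/
open Matrix ComplexOrder Kronecker
open scoped InnerProductSpace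

section SqrtAux
open scoped MatrixOrder
variable {n : Type*} [Fintype n] [DecidableEq n]

/-- Square root of a positive semidefinite matrix (spectral form). -/
noncomputable def Matrix.PosSemidef.sqrt {A : Matrix n n ℂ} (hA : A.PosSemidef) :
    Matrix n n ℂ :=
  hA.1.eigenvectorUnitary.1 * diagonal (((↑) : ℝ → ℂ) ∘ (√·) ∘ hA.1.eigenvalues) *
    (star hA.1.eigenvectorUnitary : Matrix n n ℂ)

lemma Matrix.PosSemidef.sqrt_eq_cfc {A : Matrix n n ℂ} (hA : A.PosSemidef) :
    hA.sqrt = CFC.sqrt A := by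
  rw [CFC.sqrt_eq_real_sqrt A hA.nonneg, cfcₙ_eq_cfc, hA.1.cfc_eq]
  simp [Matrix.PosSemidef.sqrt, IsHermitian.cfc, Unitary.conjStarAlgAut_apply]

lemma Matrix.PosSemidef.posSemidef_sqrt {A : Matrix n n ℂ} (hA : A.PosSemidef) :
    hA.sqrt.PosSemidef := by
  rw [hA.sqrt_eq_cfc]
  exact (CFC.sqrt_nonneg A).posSemidef

lemma Matrix.PosSemidef.sqrt_mul_self {A : Matrix n n ℂ} (hA : A.PosSemidef) :
    hA.sqrt * hA.sqrt = A := by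
  rw [hA.sqrt_eq_cfc]
  exact CFC.sqrt_mul_sqrt_self A hA.nonneg

lemma Matrix.PosSemidef.eq_sqrt_of_sq_eq {A B : Matrix n n ℂ} (hA : A.PosSemidef)
    (hB : B.PosSemidef) (hAB : A ^ 2 = B) : A = hB.sqrt := by
  rw [hB.sqrt_eq_cfc]
  exact (CFC.sqrt_unique (by rw [← pow_two]; exact hAB) hA.nonneg).symm

end SqrtAux

/-- Inner product of `toLp` vectors as a dot product. -/
lemma TNAux_inner_equiv_symm {n : Type*} [Fintype n] (u w : n → ℂ) :
    ⟪(WithLp.equiv 2 (n → ℂ)).symm u, (WithLp.equiv 2 (n → ℂ)).symm w⟫_ℂ = star u ⬝ᵥ w := by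
  rw [dotProduct_comm]; rfl

namespace TNAux
set_option linter.unusedSectionVars false
variable {n : Type*} [Fintype n] [DecidableEq n]

/-- Conjugation of a real diagonal by a fixed matrix. -/
noncomputable def frame (U : Matrix n n ℂ) (f : n → ℝ) : Matrix n n ℂ :=
  U * diagonal (fun i => (f i : ℂ)) * Uᴴ

lemma frame_mul {U : Matrix n n ℂ} (hU : U ∈ unitaryGroup n ℂ) (f g : n → ℝ) :
    frame U f * frame U g = frame U (fun i => f i * g i) := by
  have h1 : Uᴴ * U = 1 := by
    simpa [star_eq_conjTranspose] using mem_unitaryGroup_iff'.mp hU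
  simp only [frame, Matrix.mul_assoc]
  rw [← Matrix.mul_assoc Uᴴ U, h1, Matrix.one_mul,
    ← Matrix.mul_assoc (diagonal _) (diagonal _), diagonal_mul_diagonal]
  push_cast
  rfl

lemma frame_conjTranspose (U : Matrix n n ℂ) (f : n → ℝ) :
    (frame U f)ᴴ = frame U f := by
  have hd : (diagonal fun i => (f i : ℂ))ᴴ = diagonal fun i => (f i : ℂ) := by
    rw [diagonal_conjTranspose]
    have : (star fun i => (f i : ℂ)) = fun i => (f i : ℂ) :=
      funext fun i => Complex.conj_ofReal _
    rw [this]
  rw [frame, conjTranspose_mul, conjTranspose_mul, hd, conjTranspose_conjTranspose,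
    Matrix.mul_assoc]

lemma frame_posSemidef {U : Matrix n n ℂ} (f : n → ℝ) (hf : ∀ i, 0 ≤ f i) :
    (frame U f).PosSemidef := by
  have : PosSemidef (diagonal (fun i => (f i : ℂ))) := by
    refine PosSemidef.diagonal fun i => ?_
    simpa using Complex.real_le_real.mpr (hf i)
  exact this.mul_mul_conjTranspose_same U

lemma frame_trace {U : Matrix n n ℂ} (hU : U ∈ unitaryGroup n ℂ) (f : n → ℝ) :
    (frame U f).trace = ((∑ i, f i : ℝ) : ℂ) := by
  have h1 : Uᴴ * U = 1 := by
    simpa [star_eq_conjTranspose] using mem_unitaryGroup_iff'.mp hU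
  rw [frame, trace_mul_comm, ← Matrix.mul_assoc, h1, Matrix.one_mul, trace_diagonal]
  push_cast
  rfl

lemma frame_one {U : Matrix n n ℂ} (hU : U ∈ unitaryGroup n ℂ) :
    frame U (fun _ => 1) = 1 := by
  have h1 : U * Uᴴ = 1 := by
    simpa [star_eq_conjTranspose] using mem_unitaryGroup_iff.mp hU
  simp [frame, h1]

lemma frame_sub (U : Matrix n n ℂ) (f g : n → ℝ) :
    frame U f - frame U g = frame U (fun i => f i - g i) := by
  simp only [frame, ← Matrix.sub_mul, ← Matrix.mul_sub, diagonal_sub]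
  push_cast
  rfl


lemma re_dot_self_eq (u : n → ℂ) :
    (star u ⬝ᵥ u).re = ∑ i, Complex.normSq (u i) := by
  simp only [dotProduct, Pi.star_apply, Complex.re_sum]
  exact Finset.sum_congr rfl fun i _ => by
    simp [Complex.mul_re, Complex.normSq_apply]

lemma re_dot_self_nonneg (u : n → ℂ) : 0 ≤ (star u ⬝ᵥ u).re := by
  rw [re_dot_self_eq]
  exact Finset.sum_nonneg fun i _ => Complex.normSq_nonneg _

lemma abs_dot_le (u w : n → ℂ) :
    ‖star u ⬝ᵥ w‖ ≤
      Real.sqrt ((star u ⬝ᵥ u).re) * Real.sqrt ((star w ⬝ᵥ w).re) := by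
  have h1 : ⟪(WithLp.equiv 2 (n → ℂ)).symm u, (WithLp.equiv 2 (n → ℂ)).symm w⟫_ℂ
      = star u ⬝ᵥ w := TNAux_inner_equiv_symm u w
  have h2 := norm_inner_le_norm (𝕜 := ℂ)
    ((WithLp.equiv 2 (n → ℂ)).symm u) ((WithLp.equiv 2 (n → ℂ)).symm w)
  rw [h1] at h2
  have hnu : ‖(WithLp.equiv 2 (n → ℂ)).symm u‖ = Real.sqrt ((star u ⬝ᵥ u).re) := by
    rw [norm_eq_sqrt_re_inner (𝕜 := ℂ), TNAux_inner_equiv_symm,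
      RCLike.re_to_complex]
  have hnw : ‖(WithLp.equiv 2 (n → ℂ)).symm w‖ = Real.sqrt ((star w ⬝ᵥ w).re) := by
    rw [norm_eq_sqrt_re_inner (𝕜 := ℂ), TNAux_inner_equiv_symm,
      RCLike.re_to_complex]
  rw [hnu, hnw] at h2
  simpa using h2

lemma contraction_dot {C : Matrix n n ℂ} (h : (1 - Cᴴ * C).PosSemidef) (u : n → ℂ) :
    (star (C *ᵥ u) ⬝ᵥ (C *ᵥ u)).re ≤ (star u ⬝ᵥ u).re := by
  have h2 := h.re_dotProduct_nonneg u
  have h3 : star u ⬝ᵥ ((1 - Cᴴ * C) *ᵥ u) = star u ⬝ᵥ u - star (C *ᵥ u) ⬝ᵥ (C *ᵥ u) := by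
    rw [Matrix.sub_mulVec, dotProduct_sub, Matrix.one_mulVec]
    congr 1
    rw [← Matrix.mulVec_mulVec, Matrix.dotProduct_mulVec, ← Matrix.star_mulVec]
  rw [h3] at h2
  simp only [RCLike.re_to_complex, Complex.sub_re] at h2
  linarith

set_option maxHeartbeats 2000000 in
/-- Dual characterization of the trace norm via contractions. -/
theorem traceNorm_dual (X : Matrix n n ℂ) :
    ∃ B : Matrix n n ℂ, (1 - Bᴴ * B).PosSemidef ∧ ((B * X).trace).re = traceNorm X ∧
      ∀ B' : Matrix n n ℂ, (1 - B'ᴴ * B').PosSemidef → ((B' * X).trace).re ≤ traceNorm X := by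
  have hQ := Matrix.posSemidef_conjTranspose_mul_self X
  set S : Matrix n n ℂ := hQ.sqrt with hSdef
  have hS : S.PosSemidef := hQ.posSemidef_sqrt
  have hSS : S * S = Xᴴ * X := hQ.sqrt_mul_self
  have hH : S.IsHermitian := hS.1
  have htn : traceNorm X = S.trace.re := rfl
  set U : Matrix n n ℂ := (IsHermitian.eigenvectorUnitary hH : Matrix n n ℂ) with hUdef
  have hU : U ∈ unitaryGroup n ℂ := (IsHermitian.eigenvectorUnitary hH).2
  set lam : n → ℝ := hH.eigenvalues with hlamdef
  have hlam : ∀ i, 0 ≤ lam i := fun i => hS.eigenvalues_nonneg i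
  have hSframe : S = frame U lam := hH.spectral_theorem
  set g : n → ℝ := fun i => if lam i = 0 then 0 else (lam i)⁻¹ with hgdef
  set χ : n → ℝ := fun i => if lam i = 0 then 0 else 1 with hχdef
  set σ : n → ℝ := fun i => Real.sqrt (lam i) with hσdef
  set Sinv : Matrix n n ℂ := frame U g with hSinvdef
  set P : Matrix n n ℂ := frame U χ with hPdef
  set T : Matrix n n ℂ := frame U σ with hTdef
  have hSinvS : Sinv * S = P := by
    rw [hSframe, hSinvdef, hPdef, frame_mul hU]
    refine congrArg (frame U) (funext fun i => ?_)
    by_cases h : lam i = 0 <;> simp [hgdef, hχdef, h, inv_mul_cancel₀]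
  have hSSinv : S * Sinv = P := by
    rw [hSframe, hSinvdef, hPdef, frame_mul hU]
    refine congrArg (frame U) (funext fun i => ?_)
    by_cases h : lam i = 0 <;> simp [hgdef, hχdef, h, mul_inv_cancel₀]
  have hSP : S * P = S := by
    rw [hSframe, hPdef, frame_mul hU]
    refine congrArg (frame U) (funext fun i => ?_)
    by_cases h : lam i = 0 <;> simp [hχdef, h]
  have hPS : P * S = S := by
    rw [hSframe, hPdef, frame_mul hU]
    refine congrArg (frame U) (funext fun i => ?_)
    by_cases h : lam i = 0 <;> simp [hχdef, h]
  have hSinvP : Sinv * P = Sinv := by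
    rw [hSinvdef, hPdef, frame_mul hU]
    refine congrArg (frame U) (funext fun i => ?_)
    by_cases h : lam i = 0 <;> simp [hgdef, hχdef, h]
  have hTT : T * T = S := by
    rw [hSframe, hTdef, frame_mul hU]
    refine congrArg (frame U) (funext fun i => ?_)
    exact Real.mul_self_sqrt (hlam i)
  have hPherm : Pᴴ = P := frame_conjTranspose U χ
  have hTherm : Tᴴ = T := frame_conjTranspose U σ
  have hSinvherm : Sinvᴴ = Sinv := frame_conjTranspose U g
  have hQP : Xᴴ * X * P = Xᴴ * X := by rw [← hSS, Matrix.mul_assoc, hSP]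
  have hPQ : P * (Xᴴ * X) = Xᴴ * X := by rw [← hSS, ← Matrix.mul_assoc, hPS]
  have hXP : X * P = X := by
    have h0 : (X * P - X)ᴴ * (X * P - X) = 0 := by
      rw [conjTranspose_sub, conjTranspose_mul, hPherm, Matrix.sub_mul, Matrix.mul_sub,
        Matrix.mul_sub]
      have e1 : P * Xᴴ * (X * P) = Xᴴ * X := by
        rw [Matrix.mul_assoc, ← Matrix.mul_assoc Xᴴ X P, hQP, hPQ]
      have e2 : P * Xᴴ * X = Xᴴ * X := by rw [Matrix.mul_assoc, hPQ]
      have e3 : Xᴴ * (X * P) = Xᴴ * X := by rw [← Matrix.mul_assoc, hQP]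
      rw [e1, e2, e3]
      abel
    have := Matrix.conjTranspose_mul_self_eq_zero.mp h0
    exact sub_eq_zero.mp this
  set V : Matrix n n ℂ := X * Sinv with hVdef
  have hVS : V * S = X := by rw [hVdef, Matrix.mul_assoc, hSinvS, hXP]
  have hVP : V * P = V := by rw [hVdef, Matrix.mul_assoc, hSinvP]
  have hVHV : Vᴴ * V = P := by
    calc Vᴴ * V = Sinv * (Xᴴ * X * Sinv) := by
          rw [hVdef, conjTranspose_mul, hSinvherm, Matrix.mul_assoc, ← Matrix.mul_assoc Xᴴ X Sinv]
      _ = Sinv * (S * (S * Sinv)) := by rw [← hSS, Matrix.mul_assoc]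
      _ = Sinv * (S * P) := by rw [hSSinv]
      _ = P := by rw [hSP, hSinvS]
  clear_value S U lam g χ σ Sinv P T V
  refine ⟨Vᴴ, ?_, ?_, ?_⟩
  · have hW2 : (V * Vᴴ) * (V * Vᴴ) = V * Vᴴ := by
      rw [Matrix.mul_assoc, ← Matrix.mul_assoc Vᴴ V Vᴴ, hVHV, ← Matrix.mul_assoc, hVP]
    have key : (1 - V * Vᴴ)ᴴ * (1 - V * Vᴴ) = 1 - (Vᴴ)ᴴ * Vᴴ := by
      have hWH : (V * Vᴴ)ᴴ = V * Vᴴ := by rw [conjTranspose_mul, conjTranspose_conjTranspose]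
      rw [conjTranspose_sub, conjTranspose_one, hWH, conjTranspose_conjTranspose]
      simp only [Matrix.mul_sub, Matrix.sub_mul, Matrix.one_mul, Matrix.mul_one, hW2]
      abel
    rw [← key]
    exact Matrix.posSemidef_conjTranspose_mul_self _
  · have : Vᴴ * X = S := by
      rw [← hVS, ← Matrix.mul_assoc, hVHV, hPS]
    rw [this, htn]
  · intro B hB
    set C : Matrix n n ℂ := B * V with hCdef
    have hCcon : (1 - Cᴴ * C).PosSemidef := by
      have hmid : Vᴴ * (1 - Bᴴ * B) * V = P - Cᴴ * C := by
        rw [Matrix.mul_sub, Matrix.mul_one, Matrix.sub_mul, hVHV, hCdef, conjTranspose_mul]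
        congr 1
        simp only [Matrix.mul_assoc]
      have h1 : (1 : Matrix n n ℂ) - Cᴴ * C = (1 - P) + Vᴴ * (1 - Bᴴ * B) * V := by
        rw [hmid]; abel
      rw [h1]
      refine Matrix.PosSemidef.add ?_ (hB.conjTranspose_mul_mul_same V)
      have h1P : (1 : Matrix n n ℂ) - P = frame U (fun i => 1 - χ i) := by
        rw [← frame_one hU, hPdef, frame_sub]
      rw [h1P]
      refine frame_posSemidef _ fun i => ?_
      by_cases h : lam i = 0 <;> simp [hχdef, h]
    have htr : B * X = C * (T * T) := by
      rw [hCdef, hTT, ← hVS, Matrix.mul_assoc]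
    have htr2 : (B * X).trace = (T * (C * T)).trace := by
      rw [htr, ← Matrix.mul_assoc, Matrix.trace_mul_comm]
    have hdiag : ∀ i, ((T * (C * T)) i i).re ≤ (S i i).re := by
      intro i
      set u : n → ℂ := fun j => T j i with hudef
      have hTij : ∀ j, T i j = star (u j) := by
        intro j
        have := congrFun (congrFun hTherm i) j
        rw [conjTranspose_apply] at this
        exact this.symm
      have hent : (T * (C * T)) i i = star u ⬝ᵥ (C *ᵥ u) := by
        simp only [Matrix.mul_apply, Matrix.mulVec, dotProduct, Pi.star_apply]
        exact Finset.sum_congr rfl fun j _ => by rw [hTij j]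
      have hSii : star u ⬝ᵥ u = S i i := by
        rw [← hTT]
        simp only [Matrix.mul_apply, dotProduct, Pi.star_apply]
        exact Finset.sum_congr rfl fun j _ => by rw [hTij j]
      have hb1 : ((T * (C * T)) i i).re ≤ ‖(T * (C * T)) i i‖ :=
        Complex.re_le_norm _
      have hb2 : ‖star u ⬝ᵥ (C *ᵥ u)‖ ≤
          Real.sqrt ((star u ⬝ᵥ u).re) * Real.sqrt ((star (C *ᵥ u) ⬝ᵥ (C *ᵥ u)).re) :=
        abs_dot_le u (C *ᵥ u)
      have hb3 : Real.sqrt ((star (C *ᵥ u) ⬝ᵥ (C *ᵥ u)).re) ≤ Real.sqrt ((star u ⬝ᵥ u).re) :=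
        Real.sqrt_le_sqrt (contraction_dot hCcon u)
      have hb4 : Real.sqrt ((star u ⬝ᵥ u).re) * Real.sqrt ((star (C *ᵥ u) ⬝ᵥ (C *ᵥ u)).re) ≤
          (star u ⬝ᵥ u).re := by
        calc Real.sqrt ((star u ⬝ᵥ u).re) * Real.sqrt ((star (C *ᵥ u) ⬝ᵥ (C *ᵥ u)).re)
            ≤ Real.sqrt ((star u ⬝ᵥ u).re) * Real.sqrt ((star u ⬝ᵥ u).re) :=
              mul_le_mul_of_nonneg_left hb3 (Real.sqrt_nonneg _)
          _ = (star u ⬝ᵥ u).re := Real.mul_self_sqrt (re_dot_self_nonneg u)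
      calc ((T * (C * T)) i i).re ≤ ‖(T * (C * T)) i i‖ := hb1
        _ = ‖star u ⬝ᵥ (C *ᵥ u)‖ := by rw [hent]
        _ ≤ Real.sqrt ((star u ⬝ᵥ u).re) * Real.sqrt ((star (C *ᵥ u) ⬝ᵥ (C *ᵥ u)).re) := hb2
        _ ≤ (star u ⬝ᵥ u).re := hb4
        _ = (S i i).re := by rw [hSii]
    calc ((B * X).trace).re = ((T * (C * T)).trace).re := by rw [htr2]
      _ = ∑ i, ((T * (C * T)) i i).re := by
          rw [Matrix.trace, Complex.re_sum]; rfl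
      _ ≤ ∑ i, (S i i).re := Finset.sum_le_sum fun i _ => hdiag i
      _ = S.trace.re := by rw [Matrix.trace, Complex.re_sum]; rfl
      _ = traceNorm X := htn.symm

lemma traceNorm_nonneg (X : Matrix n n ℂ) : 0 ≤ traceNorm X := by
  obtain ⟨B, hB, hBX, hle⟩ := traceNorm_dual X
  have h0 : (1 - (0 : Matrix n n ℂ)ᴴ * 0).PosSemidef := by
    simpa using (Matrix.PosSemidef.one (n := n) (R := ℂ))
  simpa using hle 0 h0

lemma traceNorm_zero : traceNorm (0 : Matrix n n ℂ) = 0 := by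
  obtain ⟨B, hB, hBX, hle⟩ := traceNorm_dual (0 : Matrix n n ℂ)
  rw [← hBX]
  simp

lemma traceNorm_add_le (X Y : Matrix n n ℂ) :
    traceNorm (X + Y) ≤ traceNorm X + traceNorm Y := by
  obtain ⟨B, hB, hBX, -⟩ := traceNorm_dual (X + Y)
  obtain ⟨-, -, -, hleX⟩ := traceNorm_dual X
  obtain ⟨-, -, -, hleY⟩ := traceNorm_dual Y
  have hsplit : (B * (X + Y)).trace = (B * X).trace + (B * Y).trace := by
    rw [Matrix.mul_add, trace_add]
  calc traceNorm (X + Y) = ((B * X).trace).re + ((B * Y).trace).re := by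
        rw [← hBX, hsplit, Complex.add_re]
    _ ≤ traceNorm X + traceNorm Y := add_le_add (hleX B hB) (hleY B hB)

lemma traceNorm_sum_le {ι : Type*} (s : Finset ι) (f : ι → Matrix n n ℂ) :
    traceNorm (∑ i ∈ s, f i) ≤ ∑ i ∈ s, traceNorm (f i) := by
  classical
  induction s using Finset.cons_induction with
  | empty => simp [traceNorm_zero]
  | cons a s ha ih =>
      rw [Finset.sum_cons, Finset.sum_cons]
      exact (traceNorm_add_le _ _).trans (by linarith)

lemma abs_trace_le {B : Matrix n n ℂ} (hB : (1 - Bᴴ * B).PosSemidef) (X : Matrix n n ℂ) :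
    ‖(B * X).trace‖ ≤ traceNorm X := by
  obtain ⟨-, -, -, hle⟩ := traceNorm_dual X
  set z := (B * X).trace with hz
  rcases eq_or_ne z 0 with h0 | h0
  · rw [h0]
    simpa using traceNorm_nonneg X
  · set μ : ℂ := (starRingEnd ℂ) z / ((‖z‖ : ℝ) : ℂ) with hμ
    have habs : ‖z‖ ≠ 0 := by
      simpa using (norm_ne_zero_iff.mpr h0)
    have hμz : μ * z = ((‖z‖ : ℝ) : ℂ) := by
      have hns : (Complex.normSq z : ℂ) = ((‖z‖ : ℝ) : ℂ) * ((‖z‖ : ℝ) : ℂ) := by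
        rw [← Complex.sq_norm z]
        push_cast
        ring
      rw [hμ, div_mul_eq_mul_div, ← Complex.normSq_eq_conj_mul_self, hns,
        mul_div_assoc, div_self (by exact_mod_cast habs), mul_one]
    have hμμ : (starRingEnd ℂ) μ * μ = 1 := by
      have : ‖μ‖ = 1 := by
        rw [hμ, norm_div]
        simp [Complex.norm_conj, Complex.norm_real, abs_of_nonneg (norm_nonneg z),
          div_self (norm_ne_zero_iff.mpr h0)]
      rw [← Complex.normSq_eq_conj_mul_self, ← Complex.sq_norm, this]
      norm_num
    have hcontr : (1 - (μ • B)ᴴ * (μ • B)).PosSemidef := by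
      have : (μ • B)ᴴ * (μ • B) = Bᴴ * B := by
        rw [conjTranspose_smul, Matrix.smul_mul, Matrix.mul_smul, smul_smul]
        simp [hμμ, star_eq_conjTranspose]
      rw [this]
      exact hB
    have htr : ((μ • B) * X).trace = ((‖z‖ : ℝ) : ℂ) := by
      rw [Matrix.smul_mul, trace_smul, smul_eq_mul, ← hz, hμz]
    have := hle (μ • B) hcontr
    rw [htr] at this
    simpa using this

lemma traceNorm_smul_le (c : ℂ) (X : Matrix n n ℂ) :
    traceNorm (c • X) ≤ ‖c‖ * traceNorm X := by
  obtain ⟨B, hB, hBX, -⟩ := traceNorm_dual (c • X)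
  have h1 : (B * (c • X)).trace = c * (B * X).trace := by
    rw [Matrix.mul_smul, trace_smul, smul_eq_mul]
  calc traceNorm (c • X) = ((B * (c • X)).trace).re := hBX.symm
    _ ≤ ‖(B * (c • X)).trace‖ := Complex.re_le_norm _
    _ = ‖c‖ * ‖(B * X).trace‖ := by rw [h1, norm_mul]
    _ ≤ ‖c‖ * traceNorm X :=
        mul_le_mul_of_nonneg_left (abs_trace_le hB X) (norm_nonneg c)

lemma abs_entry_le_traceNorm (X : Matrix n n ℂ) (a b : n) :
    ‖X a b‖ ≤ traceNorm X := by
  have hcontr : (1 - (Matrix.single b a (1 : ℂ))ᴴ * Matrix.single b a (1 : ℂ)).PosSemidef := by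
    have h1 : (Matrix.single b a (1 : ℂ))ᴴ = Matrix.single a b (1 : ℂ) := by
      ext i j
      simp [conjTranspose_apply, Matrix.single, and_comm]
    have h2 : Matrix.single a b (1 : ℂ) * Matrix.single b a (1 : ℂ)
        = Matrix.single a a (1 : ℂ) := by
      simpa using Matrix.single_mul_single_same (c := (1 : ℂ)) a b a (1 : ℂ)
    rw [h1, h2]
    have e : Matrix.single a a (1 : ℂ) = diagonal (Pi.single a 1) := by
      ext i j
      simp only [Matrix.single, Matrix.of_apply, diagonal_apply, Pi.single_apply]
      by_cases h : a = i
      · subst h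
        by_cases h2 : a = j <;> simp [h2, eq_comm]
      · simp [h, Ne.symm h]
    have e2 : (1 : Matrix n n ℂ) - diagonal (Pi.single a 1)
        = diagonal (fun i => 1 - Pi.single a 1 i) := by
      ext i j
      by_cases hij : i = j <;> simp [diagonal_apply, one_apply, hij]
    rw [e, e2]
    refine Matrix.posSemidef_diagonal_iff.mpr fun i => ?_
    by_cases hia : i = a <;> simp [Pi.single_apply, hia]
  have htr : (Matrix.single b a (1 : ℂ) * X).trace = X a b := by
    simp only [Matrix.trace, Matrix.diag, Matrix.mul_apply, Matrix.single, Matrix.of_apply]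
    simp [ite_and, Finset.sum_ite_eq, Finset.sum_ite_eq']
  have := abs_trace_le hcontr X
  rw [htr] at this
  exact this

lemma traceNorm_eq_of_sq {X P : Matrix n n ℂ} (hP : P.PosSemidef) (h : P * P = Xᴴ * X) :
    traceNorm X = P.trace.re := by
  have heq := hP.eq_sqrt_of_sq_eq (Matrix.posSemidef_conjTranspose_mul_self X)
    (by rw [pow_two, h])
  rw [heq]
  rfl

lemma posSemidef_vecMulVec (w : n → ℂ) : (vecMulVec w (star w)).PosSemidef := by
  rw [vecMulVec_eq Unit, ← Matrix.conjTranspose_replicateCol]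
  exact Matrix.posSemidef_self_mul_conjTranspose _

lemma vecMulVec_conjT (u v : n → ℂ) : (vecMulVec u (star v))ᴴ = vecMulVec v (star u) := by
  ext i j
  simp only [conjTranspose_apply, vecMulVec_apply, Pi.star_apply, star_mul', star_star]
  ring

lemma vecMulVec_mul (u v w z : n → ℂ) :
    vecMulVec u (star v) * vecMulVec w (star z) = (star v ⬝ᵥ w) • vecMulVec u (star z) := by
  ext i j
  simp only [Matrix.mul_apply, vecMulVec_apply, Matrix.smul_apply, dotProduct, smul_eq_mul,
    Pi.star_apply]
  rw [Finset.sum_mul]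
  exact Finset.sum_congr rfl fun k _ => by ring

lemma dot_self_ofReal (x : n → ℂ) : star x ⬝ᵥ x = (((star x ⬝ᵥ x).re : ℝ) : ℂ) := by
  rw [re_dot_self_eq]
  push_cast
  simp only [dotProduct, Pi.star_apply]
  exact Finset.sum_congr rfl fun i _ => (Complex.normSq_eq_conj_mul_self).symm

lemma smul_vecMulVec_eq (c : ℝ) (hc : 0 ≤ c) (v : n → ℂ) :
    (c : ℂ) • vecMulVec v (star v)
      = vecMulVec ((Real.sqrt c : ℂ) • v) (star ((Real.sqrt c : ℂ) • v)) := by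
  ext i j
  simp only [Matrix.smul_apply, vecMulVec_apply, Pi.star_apply, Pi.smul_apply, smul_eq_mul,
    star_mul', Complex.star_def, Complex.conj_ofReal]
  have h2 : ((Real.sqrt c : ℂ)) * ((Real.sqrt c : ℂ)) = (c : ℂ) := by
    rw [← Complex.ofReal_mul, Real.mul_self_sqrt hc]
  rw [← h2]
  ring

lemma smul_vecMulVec_posSemidef (c : ℝ) (hc : 0 ≤ c) (v : n → ℂ) :
    ((c : ℂ) • vecMulVec v (star v)).PosSemidef := by
  rw [smul_vecMulVec_eq c hc v]
  exact posSemidef_vecMulVec _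

lemma trace_vecMulVec (v : n → ℂ) :
    (vecMulVec v (star v)).trace = (((star v ⬝ᵥ v).re : ℝ) : ℂ) := by
  rw [← dot_self_ofReal]
  simp only [Matrix.trace, Matrix.diag, vecMulVec_apply, dotProduct, Pi.star_apply]
  exact Finset.sum_congr rfl fun i _ => by ring

lemma traceNorm_vecMulVec (u v : n → ℂ) :
    traceNorm (vecMulVec u (star v))
      = Real.sqrt ((star u ⬝ᵥ u).re) * Real.sqrt ((star v ⬝ᵥ v).re) := by
  by_cases hv : v = 0
  · subst hv
    have h0 : vecMulVec u (star (0 : n → ℂ)) = 0 := by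
      ext i j; simp [vecMulVec_apply]
    rw [h0, traceNorm_zero]
    simp
  · set a : ℝ := (star u ⬝ᵥ u).re with ha
    set b : ℝ := (star v ⬝ᵥ v).re with hb
    have ha0 : 0 ≤ a := re_dot_self_nonneg u
    have hb0 : 0 < b := by
      rcases (re_dot_self_nonneg v).lt_or_eq with h | h
      · exact h
      · exfalso
        apply hv
        funext i
        have := re_dot_self_eq v
        rw [← h] at this
        have hz := Finset.sum_eq_zero_iff_of_nonneg
          (fun i _ => Complex.normSq_nonneg (v i)) |>.mp this.symm i (Finset.mem_univ i)
        exact Complex.normSq_eq_zero.mp hz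
    set c : ℝ := Real.sqrt a / Real.sqrt b with hc
    have hc0 : 0 ≤ c := div_nonneg (Real.sqrt_nonneg _) (Real.sqrt_nonneg _)
    have hP : ((c : ℂ) • vecMulVec v (star v)).PosSemidef := smul_vecMulVec_posSemidef c hc0 v
    have hsq : ((c : ℂ) • vecMulVec v (star v)) * ((c : ℂ) • vecMulVec v (star v))
        = (vecMulVec u (star v))ᴴ * vecMulVec u (star v) := by
      rw [vecMulVec_conjT, vecMulVec_mul, Matrix.smul_mul, Matrix.mul_smul, smul_smul,
        vecMulVec_mul, dot_self_ofReal u, dot_self_ofReal v, ← ha, ← hb, smul_smul]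
      congr 1
      rw [← Complex.ofReal_mul, ← Complex.ofReal_mul]
      congr 1
      rw [hc]
      rw [div_mul_div_comm, Real.mul_self_sqrt ha0, Real.mul_self_sqrt hb0.le]
      field_simp
    have := traceNorm_eq_of_sq hP hsq
    rw [this, trace_smul, trace_vecMulVec, ← hb]
    have h3 : ((c : ℂ) • ((b : ℝ) : ℂ)) = ((c * b : ℝ) : ℂ) := by
      rw [smul_eq_mul]
      push_cast
      ring
    rw [h3, Complex.ofReal_re, hc]
    have hsb : Real.sqrt b ≠ 0 := (Real.sqrt_pos.mpr hb0).ne'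
    field_simp
    rw [Real.sq_sqrt hb0.le]

lemma kron_conjTranspose {m m' p p' : Type*} (A : Matrix m m' ℂ) (B : Matrix p p' ℂ) :
    (A ⊗ₖ B)ᴴ = Aᴴ ⊗ₖ Bᴴ := by
  ext ⟨i, j⟩ ⟨k, l⟩
  simp [conjTranspose_apply, kroneckerMap_apply, star_mul', mul_comm]

lemma posSemidef_kron {m : Type*} [Fintype m] [DecidableEq m]
    {A : Matrix m m ℂ} {B : Matrix n n ℂ} (hA : A.PosSemidef) (hB : B.PosSemidef) :
    (A ⊗ₖ B).PosSemidef := by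
  have h : A ⊗ₖ B = (hA.sqrt ⊗ₖ hB.sqrt)ᴴ * (hA.sqrt ⊗ₖ hB.sqrt) := by
    rw [kron_conjTranspose, hA.posSemidef_sqrt.1, hB.posSemidef_sqrt.1,
      ← Matrix.mul_kronecker_mul, hA.sqrt_mul_self, hB.sqrt_mul_self]
  rw [h]
  exact Matrix.posSemidef_conjTranspose_mul_self _

lemma traceNorm_kron_vecMulVec {m : Type*} [Fintype m] [DecidableEq m]
    (A : Matrix m m ℂ) (u v : n → ℂ) :
    traceNorm (A ⊗ₖ vecMulVec u (star v))
      = traceNorm A * (Real.sqrt ((star u ⬝ᵥ u).re) * Real.sqrt ((star v ⬝ᵥ v).re)) := by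
  by_cases hv : v = 0
  · subst hv
    have h0 : vecMulVec u (star (0 : n → ℂ)) = (0 : Matrix n n ℂ) := by
      ext i j; simp [vecMulVec_apply]
    rw [h0]
    have h1 : A ⊗ₖ (0 : Matrix n n ℂ) = 0 := Matrix.kronecker_zero A
    rw [h1, traceNorm_zero]
    simp
  · set a : ℝ := (star u ⬝ᵥ u).re with ha
    set b : ℝ := (star v ⬝ᵥ v).re with hb
    have ha0 : 0 ≤ a := re_dot_self_nonneg u
    have hb0 : 0 < b := by
      rcases (re_dot_self_nonneg v).lt_or_eq with h | h
      · exact h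
      · exfalso
        apply hv
        funext i
        have := re_dot_self_eq v
        rw [← h] at this
        have hz := Finset.sum_eq_zero_iff_of_nonneg
          (fun i _ => Complex.normSq_nonneg (v i)) |>.mp this.symm i (Finset.mem_univ i)
        exact Complex.normSq_eq_zero.mp hz
    set c : ℝ := Real.sqrt a / Real.sqrt b with hc
    have hc0 : 0 ≤ c := div_nonneg (Real.sqrt_nonneg _) (Real.sqrt_nonneg _)
    have hcb : c * b = Real.sqrt a * Real.sqrt b := by
      rw [hc, div_mul_eq_mul_div,
        show b = Real.sqrt b * Real.sqrt b from (Real.mul_self_sqrt hb0.le).symm]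
      have hsb : Real.sqrt b ≠ 0 := (Real.sqrt_pos.mpr hb0).ne'
      field_simp
      rw [Real.sqrt_sq (Real.sqrt_nonneg b)]
    have hAQ := Matrix.posSemidef_conjTranspose_mul_self A
    set SA : Matrix m m ℂ := hAQ.sqrt with hSA
    have hSApsd : SA.PosSemidef := hAQ.posSemidef_sqrt
    have htnA : traceNorm A = SA.trace.re := rfl
    set R : Matrix n n ℂ := vecMulVec u (star v) with hR
    set R2 : Matrix n n ℂ := (c : ℂ) • vecMulVec v (star v) with hR2
    have hR2psd : R2.PosSemidef := smul_vecMulVec_posSemidef c hc0 v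
    have hR2sq : R2 * R2 = Rᴴ * R := by
      rw [hR2, hR, vecMulVec_conjT, vecMulVec_mul, Matrix.smul_mul, Matrix.mul_smul, smul_smul,
        vecMulVec_mul, dot_self_ofReal u, dot_self_ofReal v, ← ha, ← hb, smul_smul]
      congr 1
      rw [← Complex.ofReal_mul, ← Complex.ofReal_mul]
      congr 1
      rw [hc]
      rw [div_mul_div_comm, Real.mul_self_sqrt ha0, Real.mul_self_sqrt hb0.le]
      field_simp
    have hP : (SA ⊗ₖ R2).PosSemidef := posSemidef_kron hSApsd hR2psd
    have hPsq : (SA ⊗ₖ R2) * (SA ⊗ₖ R2) = (A ⊗ₖ R)ᴴ * (A ⊗ₖ R) := by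
      rw [kron_conjTranspose, ← Matrix.mul_kronecker_mul, ← Matrix.mul_kronecker_mul,
        hAQ.sqrt_mul_self, hR2sq]
    have h4 := traceNorm_eq_of_sq hP hPsq
    rw [h4, Matrix.trace_kronecker]
    have hR2tr : R2.trace = ((c * b : ℝ) : ℂ) := by
      rw [hR2, trace_smul, trace_vecMulVec, ← hb, smul_eq_mul, ← Complex.ofReal_mul]
    rw [hR2tr]
    rw [show (SA.trace * ((c * b : ℝ) : ℂ)).re = SA.trace.re * (c * b) by
      simp [Complex.mul_re]]
    rw [htnA, hcb]

end TNAux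

open TNAux in
set_option maxHeartbeats 1000000 in
/-- **Diamond-norm-type bound for Hermitian-preserving maps.**
Let `M` be a Hermitian-preserving linear map from `dA×dA` to `dB×dB` matrices, and let
`‖M‖₁ = sup_{O ≠ 0} ‖M(O)‖₁/‖O‖₁` be its induced trace norm. Then for every environment
dimension `dE` and every unit vector `Ψ ∈ ℂ^{dA} ⊗ ℂ^{dE}`,
`‖(M ⊗ id_E)(|Ψ⟩⟨Ψ|)‖₁ ≤ dA·‖M‖₁`, where `(M ⊗ id_E)(X)` is the matrix whose
`((b,e),(b',e'))` entry is `M(fun a a' => X (a,e) (a',e')) b b'`. -/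
theorem traceNorm_tensorId_pure_le {dA dB : ℕ}
    (M : Matrix (Fin dA) (Fin dA) ℂ →ₗ[ℂ] Matrix (Fin dB) (Fin dB) ℂ)
    (hM : ∀ X : Matrix (Fin dA) (Fin dA) ℂ, M Xᴴ = (M X)ᴴ)
    (dE : ℕ) (Ψ : Fin dA × Fin dE → ℂ) (hΨ : star Ψ ⬝ᵥ Ψ = 1) :
    traceNorm (Matrix.of fun p q : Fin dB × Fin dE =>
        M (Matrix.of fun a a' : Fin dA =>
          vecMulVec Ψ (star Ψ) (a, p.2) (a', q.2)) p.1 q.1)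
      ≤ dA * sSup {x : ℝ | ∃ O : Matrix (Fin dA) (Fin dA) ℂ, O ≠ 0 ∧
          x = traceNorm (M O) / traceNorm O} := by
  classical
  have hdA : 0 < dA := by
    rcases Nat.eq_zero_or_pos dA with h | h
    · subst h
      simp [dotProduct] at hΨ
    · exact h
  set T : Set ℝ := {x : ℝ | ∃ O : Matrix (Fin dA) (Fin dA) ℂ, O ≠ 0 ∧
      x = traceNorm (M O) / traceNorm O} with hT
  set S : ℝ := sSup T with hSdef
  set w : Fin dA → Fin dE → ℂ := fun a e => Ψ (a, e) with hw
  -- decomposition of an arbitrary matrix under M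
  have hMO : ∀ O : Matrix (Fin dA) (Fin dA) ℂ,
      M O = ∑ a0 : Fin dA, ∑ a0' : Fin dA, O a0 a0' • M (Matrix.single a0 a0' 1) := by
    intro O
    conv_lhs => rw [matrix_eq_sum_single O]
    rw [map_sum]
    refine Finset.sum_congr rfl fun a0 _ => ?_
    rw [map_sum]
    refine Finset.sum_congr rfl fun a0' _ => ?_
    rw [show Matrix.single a0 a0' (O a0 a0') = O a0 a0' • Matrix.single a0 a0' (1 : ℂ) by
      rw [Matrix.smul_single, smul_eq_mul, mul_one], _root_.map_smul]
  -- positivity of trace norms of O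
  have htnpos : ∀ O : Matrix (Fin dA) (Fin dA) ℂ, O ≠ 0 → 0 < traceNorm O := by
    intro O hO
    obtain ⟨a, b, hab⟩ : ∃ a b, O a b ≠ 0 := by
      by_contra h
      push_neg at h
      exact hO (by ext a b; simpa using h a b)
    calc (0 : ℝ) < ‖O a b‖ := by
          simpa using (norm_pos_iff.mpr hab)
      _ ≤ traceNorm O := abs_entry_le_traceNorm O a b
  -- boundedness of the set T
  have hbdd : BddAbove T := by
    refine ⟨∑ a0 : Fin dA, ∑ a0' : Fin dA, traceNorm (M (Matrix.single a0 a0' 1)), ?_⟩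
    rintro x ⟨O, hO, rfl⟩
    have hpos := htnpos O hO
    rw [div_le_iff₀ hpos]
    calc traceNorm (M O)
        ≤ ∑ a0 : Fin dA, ∑ a0' : Fin dA, traceNorm (O a0 a0' • M (Matrix.single a0 a0' 1)) := by
          rw [hMO O]
          refine (traceNorm_sum_le _ _).trans (Finset.sum_le_sum fun a0 _ => ?_)
          exact traceNorm_sum_le _ _
      _ ≤ ∑ a0 : Fin dA, ∑ a0' : Fin dA,
            traceNorm (M (Matrix.single a0 a0' 1)) * traceNorm O := by
          refine Finset.sum_le_sum fun a0 _ => Finset.sum_le_sum fun a0' _ => ?_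
          calc traceNorm (O a0 a0' • M (Matrix.single a0 a0' 1))
              ≤ ‖O a0 a0'‖ * traceNorm (M (Matrix.single a0 a0' 1)) :=
                traceNorm_smul_le _ _
            _ ≤ traceNorm O * traceNorm (M (Matrix.single a0 a0' 1)) :=
                mul_le_mul_of_nonneg_right (abs_entry_le_traceNorm O a0 a0')
                  (traceNorm_nonneg _)
            _ = traceNorm (M (Matrix.single a0 a0' 1)) * traceNorm O := mul_comm _ _
      _ = (∑ a0 : Fin dA, ∑ a0' : Fin dA, traceNorm (M (Matrix.single a0 a0' 1)))
            * traceNorm O := by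
          rw [Finset.sum_mul]
          exact Finset.sum_congr rfl fun a0 _ => (Finset.sum_mul _ _ _).symm
  -- trace norm of standard basis matrices is 1
  have htnE : ∀ a0 a0' : Fin dA, traceNorm (Matrix.single a0 a0' (1 : ℂ)) = 1 := by
    intro a0 a0'
    have hsingle : ∀ (c : Fin dA), star ((Pi.single c (1 : ℂ)) : Fin dA → ℂ) = ((Pi.single c (1 : ℂ)) : Fin dA → ℂ) := by
      intro c
      funext i
      by_cases h : i = c <;> simp [Pi.single_apply, h]
    have he : Matrix.single a0 a0' (1 : ℂ)
        = vecMulVec (Pi.single a0 1) (star (Pi.single a0' 1)) := by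
      rw [hsingle]
      exact single_eq_single_vecMulVec_single a0 a0'
    rw [he, traceNorm_vecMulVec]
    have hdot : ∀ (c : Fin dA), (star (Pi.single c (1 : ℂ)) ⬝ᵥ Pi.single c 1).re = 1 := by
      intro c
      rw [hsingle]
      simp [dotProduct, Pi.single_apply]
    rw [hdot, hdot, Real.sqrt_one, mul_one]
  -- each basis ratio is ≤ S
  have hmem : ∀ a0 a0' : Fin dA, traceNorm (M (Matrix.single a0 a0' 1)) ≤ S := by
    intro a0 a0'
    have hne : Matrix.single a0 a0' (1 : ℂ) ≠ 0 := by
      intro h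
      have := congrFun (congrFun h a0) a0'
      simp [Matrix.single] at this
    have hx : traceNorm (M (Matrix.single a0 a0' 1)) ∈ T := by
      refine ⟨Matrix.single a0 a0' 1, hne, ?_⟩
      rw [htnE a0 a0', div_one]
    exact le_csSup hbdd hx
  have hS0 : 0 ≤ S :=
    le_trans (traceNorm_nonneg (M (Matrix.single ⟨0, hdA⟩ ⟨0, hdA⟩ 1))) (hmem _ _)
  -- key decomposition of the big matrix
  have key : ∀ e e' : Fin dE,
      M (Matrix.of fun a a' : Fin dA => vecMulVec Ψ (star Ψ) (a, e) (a', e'))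
        = ∑ a0 : Fin dA, ∑ a0' : Fin dA,
            (vecMulVec Ψ (star Ψ) (a0, e) (a0', e')) • M (Matrix.single a0 a0' 1) := by
    intro e e'
    rw [hMO]
    refine Finset.sum_congr rfl fun a0 _ => Finset.sum_congr rfl fun a0' _ => ?_
    simp [Matrix.of_apply]
  have hdecomp : (Matrix.of fun p q : Fin dB × Fin dE =>
        M (Matrix.of fun a a' : Fin dA =>
          vecMulVec Ψ (star Ψ) (a, p.2) (a', q.2)) p.1 q.1)
      = ∑ a0 : Fin dA, ∑ a0' : Fin dA,
          (M (Matrix.single a0 a0' 1)) ⊗ₖ vecMulVec (w a0) (star (w a0')) := by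
    ext ⟨b, e⟩ ⟨b', e'⟩
    rw [Matrix.of_apply]
    rw [show ((b, e) : Fin dB × Fin dE).2 = e from rfl,
      show ((b', e') : Fin dB × Fin dE).2 = e' from rfl]
    rw [key e e']
    simp only [Matrix.sum_apply, Matrix.smul_apply, kroneckerMap_apply, vecMulVec_apply,
      Pi.star_apply, smul_eq_mul]
    refine Finset.sum_congr rfl fun a0 _ => Finset.sum_congr rfl fun a0' _ => ?_
    ring
  -- norms of the slices
  set nw : Fin dA → ℝ := fun a => Real.sqrt ((star (w a) ⬝ᵥ (w a)).re) with hnw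
  have hnw0 : ∀ a, 0 ≤ nw a := fun a => Real.sqrt_nonneg _
  have hsumsq : ∑ a : Fin dA, (nw a) ^ 2 = 1 := by
    have h1 : ∀ a, (nw a) ^ 2 = (star (w a) ⬝ᵥ (w a)).re := by
      intro a
      rw [hnw]
      exact Real.sq_sqrt (re_dot_self_nonneg _)
    have h2 : (star Ψ ⬝ᵥ Ψ).re = ∑ a : Fin dA, (star (w a) ⬝ᵥ (w a)).re := by
      rw [re_dot_self_eq]
      rw [Fintype.sum_prod_type]
      exact Finset.sum_congr rfl fun a _ => (re_dot_self_eq (w a)).symm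
    have h3 : (star Ψ ⬝ᵥ Ψ).re = 1 := by rw [hΨ]; simp
    calc ∑ a : Fin dA, (nw a) ^ 2 = ∑ a : Fin dA, (star (w a) ⬝ᵥ (w a)).re :=
          Finset.sum_congr rfl fun a _ => h1 a
      _ = 1 := by rw [← h2, h3]
  have hCS : (∑ a : Fin dA, nw a) ^ 2 ≤ dA := by
    have := sq_sum_le_card_mul_sum_sq (s := (Finset.univ : Finset (Fin dA))) (f := nw)
    simpa [hsumsq] using this
  -- the final chain
  rw [hdecomp]
  calc traceNorm (∑ a0 : Fin dA, ∑ a0' : Fin dA,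
          (M (Matrix.single a0 a0' 1)) ⊗ₖ vecMulVec (w a0) (star (w a0')))
      ≤ ∑ a0 : Fin dA, ∑ a0' : Fin dA,
          traceNorm ((M (Matrix.single a0 a0' 1)) ⊗ₖ vecMulVec (w a0) (star (w a0'))) := by
        refine (traceNorm_sum_le _ _).trans (Finset.sum_le_sum fun a0 _ => ?_)
        exact traceNorm_sum_le _ _
    _ = ∑ a0 : Fin dA, ∑ a0' : Fin dA,
          traceNorm (M (Matrix.single a0 a0' 1)) * (nw a0 * nw a0') := by
        refine Finset.sum_congr rfl fun a0 _ => Finset.sum_congr rfl fun a0' _ => ?_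
        rw [traceNorm_kron_vecMulVec]
    _ ≤ ∑ a0 : Fin dA, ∑ a0' : Fin dA, S * (nw a0 * nw a0') := by
        refine Finset.sum_le_sum fun a0 _ => Finset.sum_le_sum fun a0' _ => ?_
        exact mul_le_mul_of_nonneg_right (hmem a0 a0')
          (mul_nonneg (hnw0 a0) (hnw0 a0'))
    _ = S * (∑ a : Fin dA, nw a) ^ 2 := by
        rw [sq, Finset.sum_mul_sum, Finset.mul_sum]
        refine Finset.sum_congr rfl fun a0 _ => ?_
        rw [Finset.mul_sum]
    _ ≤ S * dA := mul_le_mul_of_nonneg_left hCS hS0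
    _ = dA * S := mul_comm _ _
end
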